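/- arXiv:0912.3222 — 7 statements merged into one kernel-verified Lean document; each statement's English description precedes it below -/
import Mathlib

section
/- Let T be an n×n real M-matrix (or an irreducible matrix satisfying condition T2 together with vᵀb ≤ 0), and consider the iteration P⁰ = O, (I − Pᵏ + T·Pᵏ)·x^{k+1} = b, Pᵏ = P(xᵏ). Then there exists k ≤ n such that (P^{k+1} − Pᵏ)·x^{k+1} = 0, i.e. the iteration converges to an exact solution of [I − P(x) + T·P(x)]·x = b in at most n steps. -/
open Matrix

/-- Spectral radius of a real matrix: supremum of absolute values of its complex eigenvalues. -/
noncomputable def specRad {n : ℕ} (B : Matrix (Fin n) (Fin n) ℝ) : ℝ :=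
  sSup {r : ℝ | ∃ μ ∈ spectrum ℂ (B.map (fun a => (a : ℂ))), r = ‖μ‖}

/-- `T` is an M-matrix: `T = α•I - B` with `B ≥ O` entrywise and `ρ(B) < α`. -/
def IsMmat {n : ℕ} (T : Matrix (Fin n) (Fin n) ℝ) : Prop :=
  ∃ (α : ℝ) (B : Matrix (Fin n) (Fin n) ℝ),
    (∀ i j, 0 ≤ B i j) ∧ specRad B < α ∧ T = α • (1 : Matrix (Fin n) (Fin n) ℝ) - B

/-- `P(x)`: diagonal matrix with i-th entry `1` if `x i ≥ 0`, else `0`. -/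
noncomputable def Pmat {n : ℕ} (x : Fin n → ℝ) : Matrix (Fin n) (Fin n) ℝ :=
  Matrix.diagonal fun i => if 0 ≤ x i then 1 else 0

/-- Irreducibility of a matrix (strong connectivity of its directed graph). -/
def IsIrred {n : ℕ} (T : Matrix (Fin n) (Fin n) ℝ) : Prop :=
  ∀ S : Finset (Fin n), S.Nonempty → S ≠ Finset.univ → ∃ i ∈ S, ∃ j ∉ S, T i j ≠ 0

/-- Condition T2: `T` is irreducible, `null(Tᵀ) = span(v)`, `null(T) = span(w)` with
`v, w > 0` componentwise, and `T + D` is an M-matrix for every diagonal `D ≥ O`, `D ≠ O`. -/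
def CondT2 {n : ℕ} (T : Matrix (Fin n) (Fin n) ℝ) (v w : Fin n → ℝ) : Prop :=
  IsIrred T ∧ (∀ i, 0 < v i) ∧ (∀ i, 0 < w i) ∧
  LinearMap.ker (Matrix.mulVecLin Tᵀ) = Submodule.span ℝ {v} ∧
  LinearMap.ker (Matrix.mulVecLin T) = Submodule.span ℝ {w} ∧
  (∀ d : Fin n → ℝ, (∀ i, 0 ≤ d i) → d ≠ 0 → IsMmat (T + Matrix.diagonal d))

namespace Stmt10Aux

open Filter Topology
open scoped ENNReal NNReal


variable {n : ℕ}

/-- entrywise nonnegativity -/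
def NN (M : Matrix (Fin n) (Fin n) ℝ) : Prop := ∀ i j, 0 ≤ M i j

lemma NN.mul {M N : Matrix (Fin n) (Fin n) ℝ} (hM : NN M) (hN : NN N) : NN (M * N) := by
  intro i j
  rw [Matrix.mul_apply]
  exact Finset.sum_nonneg fun k _ => mul_nonneg (hM i k) (hN k j)

lemma NN.add {M N : Matrix (Fin n) (Fin n) ℝ} (hM : NN M) (hN : NN N) : NN (M + N) :=
  fun i j => add_nonneg (hM i j) (hN i j)

lemma NN.mulVec {M : Matrix (Fin n) (Fin n) ℝ} (hM : NN M) {u : Fin n → ℝ}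
    (hu : ∀ i, 0 ≤ u i) : ∀ i, 0 ≤ (M *ᵥ u) i := by
  intro i
  rw [Matrix.mulVec, dotProduct]
  exact Finset.sum_nonneg fun k _ => mul_nonneg (hM i k) (hu k)

lemma NN.pow {M : Matrix (Fin n) (Fin n) ℝ} (hM : NN M) : ∀ m, NN (M ^ m) := by
  intro m
  induction m with
  | zero => intro i j; simp [Matrix.one_apply]; split <;> norm_num
  | succ m ih => rw [pow_succ]; exact ih.mul hM

lemma Pmat_NN (x : Fin n → ℝ) : NN (Pmat x) := by
  intro i j
  unfold Pmat
  rcases eq_or_ne i j with rfl | h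
  · rw [Matrix.diagonal_apply_eq]; split <;> norm_num
  · rw [Matrix.diagonal_apply_ne _ h]

lemma one_sub_Pmat (x : Fin n → ℝ) :
    (1 : Matrix (Fin n) (Fin n) ℝ) - Pmat x
      = Matrix.diagonal (fun i => if 0 ≤ x i then 0 else 1) := by
  unfold Pmat
  rw [← Matrix.diagonal_one, Matrix.diagonal_sub]
  exact congrArg Matrix.diagonal (funext fun i => by split <;> norm_num)

lemma one_sub_Pmat_NN (x : Fin n → ℝ) : NN (1 - Pmat x) := by
  rw [one_sub_Pmat]
  intro i j
  rcases eq_or_ne i j with rfl | h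
  · rw [Matrix.diagonal_apply_eq]; split <;> norm_num
  · rw [Matrix.diagonal_apply_ne _ h]

lemma Pmat_mul_self (x : Fin n → ℝ) : Pmat x * Pmat x = Pmat x := by
  unfold Pmat
  rw [Matrix.diagonal_mul_diagonal]
  exact congrArg Matrix.diagonal (funext fun i => by split <;> norm_num)

/-- pigeonhole for a monotone chain of subsets -/
lemma pigeon (S : ℕ → Finset (Fin n)) (h0 : S 0 = ∅)
    (hmono : ∀ k ≤ n, S k ⊆ S (k + 1)) : ∃ k ≤ n, S k = S (k + 1) := by
  by_contra hc
  push_neg at hc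
  have key : ∀ k ≤ n + 1, k ≤ (S k).card := by
    intro k hk
    induction k with
    | zero => omega
    | succ k ih =>
      have hk' : k ≤ n := by omega
      have h1 : S k ⊂ S (k + 1) := (hmono k hk').ssubset_of_ne (hc k hk')
      have := Finset.card_lt_card h1
      have := ih (by omega)
      omega
  have h2 := key (n + 1) le_rfl
  have h3 : (S (n + 1)).card ≤ n := by
    simpa using Finset.card_le_card (Finset.subset_univ (S (n + 1)))
  omega

attribute [local instance] Matrix.linftyOpNormedAddCommGroup Matrix.linftyOpNormedRing
  Matrix.linftyOpNormedAlgebra Matrix.linfty_opNormOneClass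

def EigLt (B : Matrix (Fin n) (Fin n) ℝ) (α : ℝ) : Prop :=
  ∀ μ ∈ spectrum ℂ (B.map (fun a => (a : ℂ))), ‖μ‖ < α

noncomputable def cmap (M : Matrix (Fin n) (Fin n) ℝ) : Matrix (Fin n) (Fin n) ℂ :=
  M.map (fun a => (a : ℂ))

lemma cmap_eq (M : Matrix (Fin n) (Fin n) ℝ) :
    cmap M = Complex.ofRealHom.mapMatrix M := rfl

lemma cmap_pow (M : Matrix (Fin n) (Fin n) ℝ) (m : ℕ) :
    (cmap M) ^ m = cmap (M ^ m) := by
  rw [cmap_eq, cmap_eq, ← map_pow]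

lemma nnnorm_cmap (M : Matrix (Fin n) (Fin n) ℝ) : ‖cmap M‖₊ = ‖M‖₊ := by
  rw [Matrix.linfty_opNNNorm_def, Matrix.linfty_opNNNorm_def]
  exact Finset.sup_congr rfl fun i _ =>
    Finset.sum_congr rfl fun j _ => Complex.nnnorm_real _

lemma entry_le_nnnorm (M : Matrix (Fin n) (Fin n) ℝ) (i j : Fin n) : |M i j| ≤ ‖M‖ := by
  rw [Matrix.linfty_opNorm_def]
  have h1 : ‖M i j‖₊ ≤ ∑ j', ‖M i j'‖₊ :=
    Finset.single_le_sum (f := fun j' => ‖M i j'‖₊) (fun _ _ => zero_le) (Finset.mem_univ j)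
  have h2 : (∑ j', ‖M i j'‖₊) ≤ Finset.univ.sup (fun i => ∑ j', ‖M i j'‖₊) :=
    Finset.le_sup (f := fun i => ∑ j', ‖M i j'‖₊) (Finset.mem_univ i)
  calc |M i j| = (‖M i j‖₊ : ℝ) := by simp [Real.norm_eq_abs]
    _ ≤ _ := by exact_mod_cast le_trans h1 h2

lemma nnnorm_le_of_entry_le {C B : Matrix (Fin n) (Fin n) ℝ}
    (h : ∀ i j, |C i j| ≤ B i j) : ‖C‖₊ ≤ ‖B‖₊ := by
  rw [Matrix.linfty_opNNNorm_def, Matrix.linfty_opNNNorm_def]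
  refine Finset.sup_mono_fun fun i _ => Finset.sum_le_sum fun j _ => ?_
  have hB : 0 ≤ B i j := le_trans (abs_nonneg _) (h i j)
  have : ‖C i j‖ ≤ ‖B i j‖ := by
    rw [Real.norm_eq_abs, Real.norm_eq_abs, abs_of_nonneg hB]
    exact h i j
  exact this

lemma pow_entry_le {C B : Matrix (Fin n) (Fin n) ℝ} (hC : NN C)
    (h : ∀ i j, C i j ≤ B i j) (m : ℕ) : ∀ i j, (C ^ m) i j ≤ (B ^ m) i j := by
  have hB : NN B := fun i j => le_trans (hC i j) (h i j)
  have hCp : ∀ m, NN (C ^ m) := by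
    intro m
    induction m with
    | zero => intro i j; rcases eq_or_ne i j with rfl | hij
              · simp [Matrix.one_apply_eq]
              · simp [Matrix.one_apply_ne hij]
    | succ m ih => rw [pow_succ]; intro i j; rw [Matrix.mul_apply]
                   exact Finset.sum_nonneg fun k _ => mul_nonneg (ih i k) (hC k j)
  induction m with
  | zero => intro i j; simp
  | succ m ih =>
    intro i j
    rw [pow_succ, pow_succ, Matrix.mul_apply, Matrix.mul_apply]
    refine Finset.sum_le_sum fun k _ => ?_
    exact mul_le_mul (ih i k) (h k j) (hC k j) (le_trans (hCp m i k) (ih i k))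

lemma geom (hn : 0 < n) {B : Matrix (Fin n) (Fin n) ℝ} {α : ℝ} (hE : EigLt B α) :
    ∃ β : ℝ, 0 < β ∧ β < α ∧ ∀ᶠ m in atTop, ‖B ^ m‖ ≤ β ^ m := by
  haveI : Nonempty (Fin n) := Fin.pos_iff_nonempty.mp hn
  haveI : Nontrivial (Matrix (Fin n) (Fin n) ℂ) := by
    refine ⟨0, 1, fun h => ?_⟩
    have := congr_fun (congr_fun h ⟨0, hn⟩) ⟨0, hn⟩
    simp [Matrix.one_apply_eq] at this
  haveI : CompleteSpace (Matrix (Fin n) (Fin n) ℂ) :=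
    inferInstance
  set B' := B.map (fun a => (a : ℂ)) with hB'
  obtain ⟨μ₀, hμ₀, hmax⟩ := (spectrum.isCompact B').exists_isMaxOn (spectrum.nonempty B')
    (continuous_norm.continuousOn)
  have hμα : ‖μ₀‖ < α := by exact hE μ₀ hμ₀
  have hα0 : 0 < α := lt_of_le_of_lt (norm_nonneg _) hμα
  set β := (‖μ₀‖ + α) / 2 with hβ
  have hβpos : 0 < β := by have := norm_nonneg μ₀; simp only [hβ]; linarith
  have hβα : β < α := by simp only [hβ]; linarith
  have hμβ : ‖μ₀‖ < β := by simp only [hβ]; linarith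
  have hsr : spectralRadius ℂ B' ≤ (‖μ₀‖₊ : ℝ≥0∞) := by
    rw [spectralRadius]
    exact iSup₂_le fun k hk => by exact_mod_cast hmax hk
  have hlt : spectralRadius ℂ B' < (β.toNNReal : ℝ≥0∞) := by
    refine lt_of_le_of_lt hsr ?_
    rw [ENNReal.coe_lt_coe]
    rw [← NNReal.coe_lt_coe]
    rw [coe_nnnorm, Real.coe_toNNReal _ hβpos.le]
    exact hμβ
  have hev := (spectrum.pow_nnnorm_pow_one_div_tendsto_nhds_spectralRadius B').eventually_lt_const hlt
  refine ⟨β, hβpos, hβα, ?_⟩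
  filter_upwards [hev, eventually_ge_atTop 1] with m hm hm1
  have h1 : ((‖B' ^ m‖₊ : ℝ≥0∞) ^ (1 / (m : ℝ))) ^ (m : ℝ)
      ≤ ((β.toNNReal : ℝ≥0∞)) ^ (m : ℝ) :=
    ENNReal.rpow_le_rpow hm.le (Nat.cast_nonneg m)
  have hm0 : (m : ℝ) ≠ 0 := Nat.cast_ne_zero.mpr (by omega)
  rw [← ENNReal.rpow_mul, one_div, inv_mul_cancel₀ hm0, ENNReal.rpow_one] at h1
  rw [ENNReal.rpow_natCast, ← ENNReal.coe_pow, ENNReal.coe_le_coe] at h1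
  have h2 : ‖B' ^ m‖ ≤ β ^ m := by
    have := NNReal.coe_le_coe.mpr h1
    rw [coe_nnnorm] at this
    refine le_trans this ?_
    rw [NNReal.coe_pow, Real.coe_toNNReal _ hβpos.le]
  calc ‖B ^ m‖ = ‖B' ^ m‖ := by
        rw [← coe_nnnorm, ← coe_nnnorm]
        congr 1
        rw [hB']
        rw [show (B.map fun a => (a:ℂ)) = cmap B from rfl, cmap_pow (M := B) m, nnnorm_cmap]
    _ ≤ β ^ m := h2

lemma tail_and_eig (hn : 0 < n) {C B : Matrix (Fin n) (Fin n) ℝ} {α : ℝ}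
    (hC : NN C) (hCB : ∀ i j, C i j ≤ B i j) (hE : EigLt B α) :
    EigLt C α ∧ ∃ β : ℝ, 0 < β ∧ β < α ∧ ∀ᶠ m in atTop, ‖C ^ m‖ ≤ β ^ m := by
  haveI : Nonempty (Fin n) := Fin.pos_iff_nonempty.mp hn
  obtain ⟨β, hβ0, hβα, hev⟩ := geom hn hE
  have htail : ∀ᶠ m in atTop, ‖C ^ m‖ ≤ β ^ m := by
    filter_upwards [hev] with m hm
    refine le_trans ?_ hm
    have h1 : ‖C ^ m‖₊ ≤ ‖B ^ m‖₊ := nnnorm_le_of_entry_le fun i j => by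
      rw [abs_of_nonneg (hC.pow m i j)]
      exact pow_entry_le hC hCB m i j
    exact_mod_cast h1
  refine ⟨?_, β, hβ0, hβα, htail⟩
  intro μ hμ
  by_contra hge
  push_neg at hge
  have hnμ : α ≤ ‖μ‖ := by exact hge
  have hβμ : β < ‖μ‖ := lt_of_lt_of_le hβα hnμ
  have hμ0 : 0 < ‖μ‖ := lt_of_le_of_lt hβ0.le hβμ
  have hpow : ∀ m : ℕ, ‖μ‖ ^ m ≤ ‖C ^ m‖ := by
    intro m
    have hmem : μ ^ m ∈ spectrum ℂ ((C.map (fun a => (a:ℂ))) ^ m) :=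
      spectrum.pow_image_subset (C.map (fun a => (a:ℂ))) m ⟨μ, hμ, rfl⟩
    have h2 : ‖μ ^ m‖ ≤ ‖(C.map (fun a => (a:ℂ))) ^ m‖ := spectrum.norm_le_norm_of_mem hmem
    rw [norm_pow] at h2
    refine le_trans h2 (le_of_eq ?_)
    rw [← coe_nnnorm, ← coe_nnnorm]
    congr 1
    rw [show (C.map fun a => (a:ℂ)) = cmap C from rfl, cmap_pow, nnnorm_cmap]
  have hdiv : Filter.Tendsto (fun m : ℕ => (‖μ‖ / β) ^ m) atTop atTop :=
    tendsto_pow_atTop_atTop_of_one_lt (by rw [lt_div_iff₀ hβ0]; simpa using hβμ)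
  obtain ⟨m, hm1, hm2⟩ := ((hdiv.eventually_gt_atTop 1).and htail).exists
  have : (‖μ‖ / β) ^ m ≤ 1 := by
    rw [div_pow, div_le_one (by positivity)]
    exact le_trans (hpow m) hm2
  linarith

lemma unit_and_invNN (hn : 0 < n) {C : Matrix (Fin n) (Fin n) ℝ} {α : ℝ} (hα : 0 < α)
    (hC : NN C) (hEC : EigLt C α) {β : ℝ} (hβ0 : 0 < β) (hβα : β < α)
    (htail : ∀ᶠ m in atTop, ‖C ^ m‖ ≤ β ^ m) :
    IsUnit (α • (1 : Matrix (Fin n) (Fin n) ℝ) - C).det ∧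
      NN (α • (1 : Matrix (Fin n) (Fin n) ℝ) - C)⁻¹ := by
  haveI : Nonempty (Fin n) := Fin.pos_iff_nonempty.mp hn
  set A := α • (1 : Matrix (Fin n) (Fin n) ℝ) - C with hA
  have hmap : (A.map (fun a => (a:ℂ)))
      = algebraMap ℂ (Matrix (Fin n) (Fin n) ℂ) (α:ℂ) - C.map (fun a => (a:ℂ)) := by
    ext i j
    rcases eq_or_ne i j with rfl | hij
    · simp [hA, Matrix.map_apply, Matrix.sub_apply, Matrix.smul_apply, Matrix.one_apply_eq,
        Matrix.algebraMap_matrix_apply]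
    · simp [hA, Matrix.map_apply, Matrix.sub_apply, Matrix.smul_apply, Matrix.one_apply_ne hij,
        Matrix.algebraMap_matrix_apply, hij]
  have hdet : IsUnit A.det := by
    rw [isUnit_iff_ne_zero]
    intro h0
    have hαspec : (α:ℂ) ∈ spectrum ℂ (C.map (fun a => (a:ℂ))) := by
      rw [spectrum.mem_iff]
      intro hu
      rw [← hmap] at hu
      have h1 := (Matrix.isUnit_iff_isUnit_det _).mp hu
      have hAmap : (A.map fun a => (a:ℂ)) = Complex.ofRealHom.mapMatrix A := rfl
      rw [hAmap, ← RingHom.map_det Complex.ofRealHom A] at h1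
      rw [h0] at h1
      simp at h1
    have := hEC _ hαspec
    rw [Complex.norm_of_nonneg hα.le] at this
    exact lt_irrefl _ this
  have hAG : A * A⁻¹ = 1 := Matrix.mul_nonsing_inv _ hdet
  refine ⟨hdet, ?_⟩
  set G := A⁻¹ with hG
  have hG1 : G = α⁻¹ • (1 + C * G) := by
    have hαG : α • G - C * G = 1 := by
      calc α • G - C * G = A * G := by
            rw [hA, sub_mul, smul_mul_assoc, one_mul]
        _ = 1 := hAG
    have h2 : α • G = 1 + C * G := by
      rw [← hαG]; abel
    rw [← h2, inv_smul_smul₀ hα.ne']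
  have key : ∀ N : ℕ, G = (∑ m ∈ Finset.range N, (α⁻¹ ^ (m+1)) • C ^ m)
      + α⁻¹ ^ N • (C ^ N * G) := by
    intro N
    induction N with
    | zero => simp
    | succ N ih =>
      rw [Finset.sum_range_succ]
      calc G = (∑ m ∈ Finset.range N, (α⁻¹ ^ (m+1)) • C ^ m) + α⁻¹ ^ N • (C ^ N * G) := ih
        _ = (∑ m ∈ Finset.range N, (α⁻¹ ^ (m+1)) • C ^ m)
              + (α⁻¹ ^ (N+1) • C ^ N + α⁻¹ ^ (N+1) • (C ^ (N+1) * G)) := by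
            congr 1
            conv_lhs => rw [hG1]
            rw [mul_smul_comm, smul_smul, ← pow_succ, mul_add, mul_one, ← mul_assoc,
              ← pow_succ, smul_add]
        _ = _ := by abel
  intro i j
  have hβα' : β / α < 1 := (div_lt_one hα).mpr hβα
  have hta : Filter.Tendsto (fun N : ℕ => -((β / α) ^ N * ‖G‖)) atTop (nhds 0) := by
    have h1 := (tendsto_pow_atTop_nhds_zero_of_lt_one (by positivity) hβα').mul_const ‖G‖
    have h2 := h1.neg
    simpa using h2
  refine le_of_tendsto hta ?_
  filter_upwards [htail] with N hN
  have hsum : 0 ≤ (∑ m ∈ Finset.range N, (α⁻¹ ^ (m+1)) • C ^ m) i j := by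
    rw [Matrix.sum_apply]
    refine Finset.sum_nonneg fun m _ => ?_
    rw [Matrix.smul_apply, smul_eq_mul]
    exact mul_nonneg (by positivity) (hC.pow m i j)
  have hent : |(C ^ N * G) i j| ≤ β ^ N * ‖G‖ := by
    refine le_trans (entry_le_nnnorm _ i j) ?_
    refine le_trans (norm_mul_le _ _) ?_
    exact mul_le_mul_of_nonneg_right hN (norm_nonneg _)
  have h3 : -((β / α) ^ N * ‖G‖) ≤ α⁻¹ ^ N * (C ^ N * G) i j := by
    have h4 : -(β ^ N * ‖G‖) ≤ (C ^ N * G) i j := neg_le_of_abs_le hent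
    have h5 : α⁻¹ ^ N * -(β ^ N * ‖G‖) ≤ α⁻¹ ^ N * (C ^ N * G) i j :=
      mul_le_mul_of_nonneg_left h4 (by positivity)
    refine le_trans (le_of_eq ?_) h5
    rw [div_pow, mul_neg]
    congr 1
    rw [inv_pow]; ring
  calc -((β / α) ^ N * ‖G‖) ≤ α⁻¹ ^ N * (C ^ N * G) i j := h3
    _ ≤ (∑ m ∈ Finset.range N, (α⁻¹ ^ (m+1)) • C ^ m) i j + α⁻¹ ^ N * (C ^ N * G) i j := by
        linarith
    _ = G i j := by
        conv_rhs => rw [key N]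
        rw [Matrix.add_apply, Matrix.smul_apply, smul_eq_mul]

lemma diag01_NN {q : Fin n → ℝ} (hq : ∀ i, q i = 0 ∨ q i = 1) : NN (Matrix.diagonal q) := by
  intro i j
  rcases eq_or_ne i j with rfl | hij
  · rw [Matrix.diagonal_apply_eq]; rcases hq i with h | h <;> rw [h] <;> norm_num
  · rw [Matrix.diagonal_apply_ne _ hij]

lemma master (hn : 0 < n) {T B E : Matrix (Fin n) (Fin n) ℝ} {α : ℝ} (hα : 0 < α)
    (hB : NN B) (hEig : EigLt B α) (x : Fin n → ℝ)
    (hT : T = α • (1 : Matrix (Fin n) (Fin n) ℝ) - B - E)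
    (hPE : Pmat x * E = 0) (hEP : E * Pmat x = 0) :
    ∃ R : Matrix (Fin n) (Fin n) ℝ,
      (1 - Pmat x + T * Pmat x) * R = 1 ∧ R * (1 - Pmat x + T * Pmat x) = 1 ∧
      ∀ (q : Fin n → ℝ), (∀ i, q i = 0 ∨ q i = 1) →
        ∀ i, 0 ≤ x i →
          0 ≤ (R *ᵥ ((1 - Matrix.diagonal q + T * Matrix.diagonal q) *ᵥ x)) i := by
  set P := Pmat x with hPdef
  have hPP : P * P = P := Pmat_mul_self x
  set C := P * B * P with hCdef
  have hC0 : NN C := ((Pmat_NN x).mul hB).mul (Pmat_NN x)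
  have hCB : ∀ i j, C i j ≤ B i j := by
    intro i j
    show ((Pmat x * B) * Pmat x) i j ≤ B i j
    unfold Pmat
    rw [Matrix.mul_diagonal, Matrix.diagonal_mul]
    have := hB i j
    split_ifs <;> simp <;> linarith
  obtain ⟨hEC, β, hβ0, hβα, htail⟩ := tail_and_eig hn hC0 hCB hEig
  obtain ⟨hdet, hGnn⟩ := unit_and_invNN hn hα hC0 hEC hβ0 hβα htail
  set A := α • (1 : Matrix (Fin n) (Fin n) ℝ) - C with hAdef
  set G := A⁻¹ with hGdef
  have hAG : A * G = 1 := Matrix.mul_nonsing_inv _ hdet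
  have hGA : G * A = 1 := Matrix.nonsing_inv_mul _ hdet
  have hPC : P * C = C := by
    rw [hCdef, ← Matrix.mul_assoc, ← Matrix.mul_assoc, hPP]
  have hCP : C * P = C := by
    rw [hCdef, Matrix.mul_assoc, Matrix.mul_assoc, hPP, ← Matrix.mul_assoc]
  have hPA : P * A = A * P := by
    rw [hAdef, Matrix.mul_sub, Matrix.sub_mul, mul_smul_comm, smul_mul_assoc, mul_one, one_mul,
      hPC, hCP]
  have hPG : P * G = G * P := by
    calc P * G = (G * A) * (P * G) := by rw [hGA, one_mul]
      _ = G * ((A * P) * G) := by rw [Matrix.mul_assoc, Matrix.mul_assoc]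
      _ = G * ((P * A) * G) := by rw [hPA]
      _ = (G * P) * (A * G) := by rw [Matrix.mul_assoc, Matrix.mul_assoc]
      _ = G * P := by rw [hAG, Matrix.mul_one]
  set g := G * P with hgdef
  have hPg : P * g = g := by
    rw [hgdef, ← Matrix.mul_assoc, hPG, Matrix.mul_assoc, hPP]
  have hAg : A * g = P := by
    rw [hgdef, ← Matrix.mul_assoc, hAG, one_mul]
  have hCg : C * g = P * (B * g) := by
    calc C * g = (P * B) * (P * g) := by rw [hCdef, Matrix.mul_assoc]
      _ = (P * B) * g := by rw [hPg]
      _ = P * (B * g) := by rw [Matrix.mul_assoc]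
  have hPBg : P * (B * g) = α • g - P := by
    have h2 : α • g - P * (B * g) = P := by
      rw [← hCg, ← hAg, hAdef, Matrix.sub_mul, smul_mul_assoc, one_mul]
    rw [sub_eq_iff_eq_add] at h2
    rw [h2]
    abel
  set R := g + (1 - P) + (1 - P) * (B * g) with hRdef
  have hM : 1 - P + T * P = 1 - P + (α • P - B * P) := by
    rw [hT, Matrix.sub_mul, Matrix.sub_mul, smul_mul_assoc, one_mul, hEP, sub_zero]
  have hP1P : P * (1 - P) = 0 := by rw [Matrix.mul_sub, Matrix.mul_one, hPP, sub_self]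
  have hPR : P * R = g := by
    rw [hRdef, Matrix.mul_add, Matrix.mul_add, hPg, hP1P, ← Matrix.mul_assoc, hP1P,
      Matrix.zero_mul, add_zero, add_zero]
  have hMR : (1 - P + T * P) * R = 1 := by
    rw [hM]
    have expand : (1 - P + (α • P - B * P)) * R = R - P * R + (α • (P * R) - B * (P * R)) := by
      rw [Matrix.add_mul, Matrix.sub_mul, Matrix.sub_mul, one_mul, smul_mul_assoc,
        Matrix.mul_assoc]
    rw [expand, hPR]
    have hR' : R = g + (1 - P) + (B * g - P * (B * g)) := by
      rw [hRdef, Matrix.sub_mul, one_mul]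
    rw [hR', hPBg]
    abel
  have hRM : R * (1 - P + T * P) = 1 := mul_eq_one_comm.mp hMR
  refine ⟨R, hMR, hRM, ?_⟩
  intro q hq i hxi
  set y : Fin n → ℝ := fun j => if 0 ≤ x j then x j else 0 with hydef
  set z : Fin n → ℝ := y - x with hzdef
  have hy0 : ∀ j, 0 ≤ y j := by
    intro j; rw [hydef]; dsimp only; split_ifs with h
    · exact h
    · exact le_refl 0
  have hz0 : ∀ j, 0 ≤ z j := by
    intro j
    rw [hzdef]; dsimp only [Pi.sub_apply]; rw [hydef]; dsimp only; split_ifs with h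
    · simp
    · simp; linarith [lt_of_not_ge h]
  have hPx : P *ᵥ x = y := by
    funext j
    rw [hPdef]; unfold Pmat
    rw [Matrix.mulVec_diagonal]
    rw [hydef]; dsimp only; split_ifs <;> simp
  have hPy : P *ᵥ y = y := by
    funext j
    rw [hPdef]; unfold Pmat
    rw [Matrix.mulVec_diagonal]
    rw [hydef]; dsimp only; split_ifs <;> simp
  set Qm := Matrix.diagonal q with hQdef
  have hPQ : P * Qm = Qm * P := by
    rw [hPdef, hQdef]; unfold Pmat
    rw [Matrix.diagonal_mul_diagonal, Matrix.diagonal_mul_diagonal]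
    exact congrArg Matrix.diagonal (funext fun j => mul_comm _ _)
  have hPQv : ∀ u : Fin n → ℝ, P *ᵥ (Qm *ᵥ u) = Qm *ᵥ (P *ᵥ u) := by
    intro u
    rw [Matrix.mulVec_mulVec, Matrix.mulVec_mulVec, hPQ]
  have hxyz : x = y - z := by rw [hzdef]; abel
  have hkey : P *ᵥ ((1 - Qm + T * Qm) *ᵥ x)
      = A *ᵥ (Qm *ᵥ y) + ((1 - Qm) *ᵥ y + (P * B * Qm) *ᵥ z) := by
    have hTv : ∀ u : Fin n → ℝ, T *ᵥ u = α • u - B *ᵥ u - E *ᵥ u := by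
      intro u
      rw [hT, Matrix.sub_mulVec, Matrix.sub_mulVec, Matrix.smul_mulVec,
        Matrix.one_mulVec]
    have hLHS : (1 - Qm + T * Qm) *ᵥ x
        = x - Qm *ᵥ x + (α • (Qm *ᵥ x) - B *ᵥ (Qm *ᵥ x) - E *ᵥ (Qm *ᵥ x)) := by
      rw [Matrix.add_mulVec, Matrix.sub_mulVec, Matrix.one_mulVec,
        ← Matrix.mulVec_mulVec, hTv]
    rw [hLHS]
    rw [Matrix.mulVec_add, Matrix.mulVec_sub, Matrix.mulVec_sub, Matrix.mulVec_sub,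
      Matrix.mulVec_smul]
    have hPE0 : P *ᵥ (E *ᵥ (Qm *ᵥ x)) = 0 := by
      rw [Matrix.mulVec_mulVec, hPE, Matrix.zero_mulVec]
    rw [hPE0, hPx, hPQv, hPx]
    have hPBQ : P *ᵥ (B *ᵥ (Qm *ᵥ x)) = (P * B) *ᵥ (Qm *ᵥ x) := by
      rw [Matrix.mulVec_mulVec]
    rw [hPBQ]
    have hRHS1 : A *ᵥ (Qm *ᵥ y) = α • (Qm *ᵥ y) - (P * B) *ᵥ (Qm *ᵥ y) := by
      rw [hAdef, Matrix.sub_mulVec, Matrix.smul_mulVec, Matrix.one_mulVec]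
      congr 1
      rw [hCdef, ← Matrix.mulVec_mulVec (M := P * B) (N := P), hPQv, hPy]
    rw [hRHS1]
    have hBQz : (P * B * Qm) *ᵥ z = (P * B) *ᵥ (Qm *ᵥ z) := by
      rw [Matrix.mulVec_mulVec]
    have h1Q : (1 - Qm) *ᵥ y = y - Qm *ᵥ y := by
      rw [Matrix.sub_mulVec, Matrix.one_mulVec]
    rw [hBQz, h1Q, hxyz, Matrix.mulVec_sub, Matrix.mulVec_sub, sub_zero]
    abel
  have hfin : P *ᵥ (R *ᵥ ((1 - Qm + T * Qm) *ᵥ x))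
      = Qm *ᵥ y + (G *ᵥ ((1 - Qm) *ᵥ y) + G *ᵥ ((P * B * Qm) *ᵥ z)) := by
    rw [Matrix.mulVec_mulVec, hPR, hgdef, ← Matrix.mulVec_mulVec, hkey,
      Matrix.mulVec_add, Matrix.mulVec_add, Matrix.mulVec_mulVec, hGA, Matrix.one_mulVec]
  have hiP : (R *ᵥ ((1 - Qm + T * Qm) *ᵥ x)) i
      = (P *ᵥ (R *ᵥ ((1 - Qm + T * Qm) *ᵥ x))) i := by
    rw [hPdef]; unfold Pmat
    rw [Matrix.mulVec_diagonal, if_pos hxi, one_mul]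
  rw [hiP, hfin]
  have t1 : 0 ≤ (Qm *ᵥ y) i := by
    rw [hQdef, Matrix.mulVec_diagonal]
    rcases hq i with h | h <;> rw [h]
    · simp
    · simpa using hy0 i
  have t2 : 0 ≤ (G *ᵥ ((1 - Qm) *ᵥ y)) i := by
    refine hGnn.mulVec (fun j => ?_) i
    rw [Matrix.sub_mulVec, Matrix.one_mulVec]
    dsimp only [Pi.sub_apply]
    rw [Matrix.mulVec_diagonal]
    rcases hq j with h | h <;> rw [h]
    · simpa using hy0 j
    · simp
  have t3 : 0 ≤ (G *ᵥ ((P * B * Qm) *ᵥ z)) i := by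
    refine hGnn.mulVec (fun j => ?_) i
    exact (((Pmat_NN x).mul hB).mul (diag01_NN hq)).mulVec hz0 j
  have := add_nonneg t1 (add_nonneg t2 t3)
  simpa using this

lemma isMmat_decomp (hn : 0 < n) {T' : Matrix (Fin n) (Fin n) ℝ} (h : IsMmat T') :
    ∃ α B', 0 < α ∧ NN B' ∧ EigLt B' α ∧
      T' = α • (1 : Matrix (Fin n) (Fin n) ℝ) - B' := by
  haveI : Nonempty (Fin n) := Fin.pos_iff_nonempty.mp hn
  haveI : Nontrivial (Matrix (Fin n) (Fin n) ℂ) := by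
    refine ⟨0, 1, fun hcon => ?_⟩
    have := congr_fun (congr_fun hcon ⟨0, hn⟩) ⟨0, hn⟩
    simp [Matrix.one_apply_eq] at this
  haveI : CompleteSpace (Matrix (Fin n) (Fin n) ℂ) :=
    inferInstance
  obtain ⟨α, B', hB0, hspec, hTe⟩ := h
  have hbdd : BddAbove {r : ℝ | ∃ μ ∈ spectrum ℂ (B'.map (fun a => (a : ℂ))), r = ‖μ‖} := by
    refine ⟨‖B'.map (fun a => (a : ℂ))‖, ?_⟩
    rintro r ⟨μ, hμ, rfl⟩
    exact spectrum.norm_le_norm_of_mem hμ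
  have hEig : EigLt B' α := by
    intro μ hμ
    refine lt_of_le_of_lt ?_ hspec
    exact le_csSup hbdd ⟨μ, hμ, rfl⟩
  have hα : 0 < α := by
    obtain ⟨μ₀, hμ₀⟩ := spectrum.nonempty (B'.map (fun a => (a : ℂ)))
    have h1 : (0:ℝ) ≤ ‖μ₀‖ := norm_nonneg μ₀
    have h2 : ‖μ₀‖ ≤ specRad B' := le_csSup hbdd ⟨μ₀, hμ₀, rfl⟩
    exact lt_of_le_of_lt (le_trans h1 h2) hspec
  exact ⟨α, B', hα, hB0, hEig, hTe⟩

lemma Pmat_eq_one {x : Fin n → ℝ} (hx : ∀ i, 0 ≤ x i) : Pmat x = 1 := by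
  unfold Pmat
  rw [show (fun i => if 0 ≤ x i then (1:ℝ) else 0) = fun _ => 1 from
    funext fun i => if_pos (hx i), Matrix.diagonal_one]

lemma Pmat_eq_zero {x : Fin n → ℝ} (hx : ∀ i, ¬ 0 ≤ x i) : Pmat x = 0 := by
  unfold Pmat
  rw [show (fun i => if 0 ≤ x i then (1:ℝ) else 0) = fun _ => 0 from
    funext fun i => if_neg (hx i), Matrix.diagonal_zero]

lemma Pmat_congr {x₁ x₂ : Fin n → ℝ} (h : ∀ i, 0 ≤ x₁ i ↔ 0 ≤ x₂ i) : Pmat x₁ = Pmat x₂ := by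
  unfold Pmat
  exact congrArg Matrix.diagonal (funext fun i => by rw [if_congr (h i) rfl rfl])

end Stmt10Aux

/-- If `T` is an M-matrix, or irreducible satisfying condition T2 with
`vᵀb ≤ 0`, then the iteration `P⁰ = O`, `x^{k+1} = (I − Pᵏ + T·Pᵏ)⁻¹·b`, `Pᵏ = P(xᵏ)`
converges in at most `n` steps: there is `k ≤ n` with `(P^{k+1} − Pᵏ)·x^{k+1} = 0`, and
then `x^{k+1}` is an exact solution of `[I − P(x) + T·P(x)]·x = b`. -/
theorem stmt10 {n : ℕ} (T : Matrix (Fin n) (Fin n) ℝ) (v w b : Fin n → ℝ)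
    (hT : IsMmat T ∨ (CondT2 T v w ∧ v ⬝ᵥ b ≤ 0))
    (x : ℕ → Fin n → ℝ) (P : ℕ → Matrix (Fin n) (Fin n) ℝ)
    (hP0 : P 0 = 0) (hPk : ∀ k, 1 ≤ k → P k = Pmat (x k))
    (hit : ∀ k, x (k + 1) = (1 - P k + T * P k)⁻¹ *ᵥ b) :
    ∃ k ≤ n, (P (k + 1) - P k) *ᵥ x (k + 1) = 0 ∧
      (1 - Pmat (x (k + 1)) + T * Pmat (x (k + 1))) *ᵥ x (k + 1) = b := by
  classical
  rcases Nat.eq_zero_or_pos n with rfl | hn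
  · exact ⟨0, le_refl 0, funext fun i => i.elim0, funext fun i => i.elim0⟩
  have hx1 : x 1 = b := by
    have h := hit 0
    rw [hP0] at h
    simpa using h
  have hsolve0 : (1 - P 0 + T * P 0) *ᵥ x 1 = b := by
    rw [hP0]
    simpa using hx1
  have hqP : ∀ k, ∃ qv : Fin n → ℝ, P k = Matrix.diagonal qv ∧ (∀ i, qv i = 0 ∨ qv i = 1) := by
    intro k
    rcases Nat.eq_zero_or_pos k with rfl | hk
    · exact ⟨0, by rw [hP0]; exact Matrix.diagonal_zero.symm, fun i => Or.inl rfl⟩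
    · refine ⟨fun i => if 0 ≤ x k i then 1 else 0, by rw [hPk k hk]; rfl, fun i => ?_⟩
      dsimp only
      split
      · exact Or.inr rfl
      · exact Or.inl rfl
  -- master machine, given a decomposition at step m
  have hmaster : ∀ m, 1 ≤ m →
      (∃ α B E, 0 < α ∧ Stmt10Aux.NN B ∧ Stmt10Aux.EigLt B α ∧
        T = α • (1 : Matrix (Fin n) (Fin n) ℝ) - B - E ∧
        Pmat (x m) * E = 0 ∧ E * Pmat (x m) = 0) →
      ((1 - P m + T * P m) *ᵥ x (m + 1) = b ∧
       ((1 - P (m - 1) + T * P (m - 1)) *ᵥ x m = b →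
          ∀ i, 0 ≤ x m i → 0 ≤ x (m + 1) i)) := by
    rintro m hm ⟨α, B, E, hα, hB, hEig, hTd, hPE, hEP⟩
    have hPm : P m = Pmat (x m) := hPk m hm
    obtain ⟨R, hMR, hRM, hpos⟩ := Stmt10Aux.master hn hα hB hEig (x m) hTd hPE hEP
    have hinv : (1 - P m + T * P m)⁻¹ = R := by
      rw [hPm]; exact Matrix.inv_eq_right_inv hMR
    have hxm1 : x (m + 1) = R *ᵥ b := by rw [hit m, hinv]
    constructor
    · rw [hxm1, hPm, Matrix.mulVec_mulVec, hMR, Matrix.one_mulVec]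
    · intro hsol i hxi
      obtain ⟨qv, hq1, hq2⟩ := hqP (m - 1)
      have hb : b = (1 - Matrix.diagonal qv + T * Matrix.diagonal qv) *ᵥ x m := by
        rw [← hq1]; exact hsol.symm
      rw [hxm1, hb]
      exact hpos qv hq2 i hxi
  -- decomposition in the M-matrix case
  have hdecM : IsMmat T → ∀ m : ℕ,
      (∃ α B E, 0 < α ∧ Stmt10Aux.NN B ∧ Stmt10Aux.EigLt B α ∧
        T = α • (1 : Matrix (Fin n) (Fin n) ℝ) - B - E ∧
        Pmat (x m) * E = 0 ∧ E * Pmat (x m) = 0) := by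
    intro hM m
    obtain ⟨α, B, hα, hB, hEig, hTe⟩ := Stmt10Aux.isMmat_decomp hn hM
    exact ⟨α, B, 0, hα, hB, hEig, by rw [hTe, sub_zero], by rw [mul_zero], by rw [zero_mul]⟩
  -- decomposition in the T2 case, provided some coordinate is negative
  have hdecC : CondT2 T v w → ∀ m : ℕ, (∃ i, ¬ 0 ≤ x m i) →
      (∃ α B E, 0 < α ∧ Stmt10Aux.NN B ∧ Stmt10Aux.EigLt B α ∧
        T = α • (1 : Matrix (Fin n) (Fin n) ℝ) - B - E ∧
        Pmat (x m) * E = 0 ∧ E * Pmat (x m) = 0) := by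
    rintro hc m ⟨i0, hi0⟩
    set d : Fin n → ℝ := fun i => if 0 ≤ x m i then 0 else 1 with hd
    have hd0 : ∀ i, 0 ≤ d i := by
      intro i; rw [hd]; dsimp only; split <;> norm_num
    have hdne : d ≠ 0 := by
      intro h
      have := congr_fun h i0
      rw [hd] at this
      dsimp only at this
      rw [if_neg hi0] at this
      norm_num at this
    obtain ⟨α, B, hα, hB, hEig, hTe⟩ :=
      Stmt10Aux.isMmat_decomp hn (hc.2.2.2.2.2 d hd0 hdne)
    refine ⟨α, B, Matrix.diagonal d, hα, hB, hEig, ?_, ?_, ?_⟩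
    · rw [← hTe]; abel
    · unfold Pmat
      rw [Matrix.diagonal_mul_diagonal, ← Matrix.diagonal_zero]
      refine congrArg Matrix.diagonal (funext fun i => ?_)
      rw [hd]; dsimp only; split <;> norm_num
    · unfold Pmat
      rw [Matrix.diagonal_mul_diagonal, ← Matrix.diagonal_zero]
      refine congrArg Matrix.diagonal (funext fun i => ?_)
      rw [hd]; dsimp only; split <;> norm_num
  -- the sign sets
  set S : ℕ → Finset (Fin n) :=
    fun m => if m = 0 then ∅ else Finset.univ.filter (fun i => 0 ≤ x m i) with hS
  have hS0 : S 0 = ∅ := by rw [hS]; dsimp only; rw [if_pos rfl]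
  have hSmem : ∀ m, 1 ≤ m → ∀ i, i ∈ S m ↔ 0 ≤ x m i := by
    intro m hm i
    rw [hS]
    dsimp only
    rw [if_neg (by omega : ¬ m = 0), Finset.mem_filter]
    simp
  -- the finishing move
  have hfinish : ∀ k, k ≤ n → P (k + 1) = P k → (1 - P k + T * P k) *ᵥ x (k + 1) = b →
      ∃ k ≤ n, (P (k + 1) - P k) *ᵥ x (k + 1) = 0 ∧
        (1 - Pmat (x (k + 1)) + T * Pmat (x (k + 1))) *ᵥ x (k + 1) = b := by
    intro k hk hPP hsol
    refine ⟨k, hk, ?_, ?_⟩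
    · rw [hPP, sub_self, Matrix.zero_mulVec]
    · have h1 : Pmat (x (k + 1)) = P (k + 1) := (hPk (k + 1) (by omega)).symm
      rw [h1, hPP]
      exact hsol
  -- converting S-set equality into P-matrix equality
  have hPeq : ∀ k, S k = S (k + 1) → (1 - P k + T * P k) *ᵥ x (k + 1) = b →
      P (k + 1) = P k := by
    intro k hSS _
    rcases Nat.eq_zero_or_pos k with rfl | hk
    · have hneg : ∀ i, ¬ 0 ≤ x 1 i := by
        intro i hi
        have : i ∈ S 1 := (hSmem 1 le_rfl i).mpr hi
        rw [← hSS, hS0] at this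
        exact absurd this (Finset.notMem_empty i)
      rw [hPk 1 le_rfl, Stmt10Aux.Pmat_eq_zero hneg, hP0]
    · rw [hPk (k + 1) (by omega), hPk k hk]
      refine Stmt10Aux.Pmat_congr fun i => ?_
      rw [← hSmem (k + 1) (by omega) i, ← hSmem k hk i, hSS]
  rcases hT with hM | ⟨hc, hvb⟩
  · -- M-matrix case
    have hdec := hdecM hM
    have hsolve : ∀ m, (1 - P m + T * P m) *ᵥ x (m + 1) = b := by
      intro m
      rcases Nat.eq_zero_or_pos m with rfl | hm
      · exact hsolve0
      · exact (hmaster m hm (hdec m)).1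
    have hmono : ∀ m, 1 ≤ m → ∀ i, 0 ≤ x m i → 0 ≤ x (m + 1) i := by
      intro m hm
      refine (hmaster m hm (hdec m)).2 ?_
      have h1 : m - 1 + 1 = m := by omega
      have h2 := hsolve (m - 1)
      rwa [h1] at h2
    have hSmono : ∀ k ≤ n, S k ⊆ S (k + 1) := by
      intro k _
      rcases Nat.eq_zero_or_pos k with rfl | hkpos
      · rw [hS0]; exact Finset.empty_subset _
      · intro i hi
        rw [hSmem (k + 1) (by omega) i]
        exact hmono k hkpos i ((hSmem k hkpos i).mp hi)
    obtain ⟨k, hk, hSS⟩ := Stmt10Aux.pigeon S hS0 hSmono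
    exact hfinish k hk (hPeq k hSS (hsolve k)) (hsolve k)
  · -- T2 case
    by_cases hall : ∀ m, 1 ≤ m → m ≤ n + 1 → ∃ i, ¬ 0 ≤ x m i
    · -- no iterate is fully nonnegative in the relevant range
      have hsolve : ∀ m ≤ n + 1, (1 - P m + T * P m) *ᵥ x (m + 1) = b := by
        intro m hmn
        rcases Nat.eq_zero_or_pos m with rfl | hm
        · exact hsolve0
        · exact (hmaster m hm (hdecC hc m (hall m hm hmn))).1
      have hmono : ∀ m, 1 ≤ m → m ≤ n → ∀ i, 0 ≤ x m i → 0 ≤ x (m + 1) i := by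
        intro m hm hmn
        refine (hmaster m hm (hdecC hc m (hall m hm (by omega)))).2 ?_
        have h1 : m - 1 + 1 = m := by omega
        have h2 := hsolve (m - 1) (by omega)
        rwa [h1] at h2
      have hSmono : ∀ k ≤ n, S k ⊆ S (k + 1) := by
        intro k hk
        rcases Nat.eq_zero_or_pos k with rfl | hkpos
        · rw [hS0]; exact Finset.empty_subset _
        · intro i hi
          rw [hSmem (k + 1) (by omega) i]
          exact hmono k hkpos hk i ((hSmem k hkpos i).mp hi)
      obtain ⟨k, hk, hSS⟩ := Stmt10Aux.pigeon S hS0 hSmono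
      exact hfinish k hk (hPeq k hSS (hsolve k (by omega))) (hsolve k (by omega))
    · -- some iterate with index in [1, n+1] is fully nonnegative
      push_neg at hall
      obtain ⟨m0, hm01, hm0n, hm0pos⟩ := hall
      have hex : ∃ m, 1 ≤ m ∧ m ≤ n + 1 ∧ ∀ i, 0 ≤ x m i := ⟨m0, hm01, hm0n, hm0pos⟩
      set k0 := Nat.find hex with hk0def
      obtain ⟨hk01, hk0n, hk0pos⟩ := Nat.find_spec hex
      have hsolK : (1 - P (k0 - 1) + T * P (k0 - 1)) *ᵥ x k0 = b := by
        rcases eq_or_lt_of_le hk01 with h1 | h2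
        · have hk0eq1 : k0 = 1 := h1.symm
          rw [hk0eq1]
          exact hsolve0
        · have hm : 1 ≤ k0 - 1 := by omega
          have hneg : ∃ i, ¬ 0 ≤ x (k0 - 1) i := by
            have hmin := Nat.find_min hex (show k0 - 1 < k0 by omega)
            push_neg at hmin
            obtain ⟨i, hi⟩ := hmin hm (by omega)
            exact ⟨i, not_le.mpr hi⟩
          have h3 := (hmaster (k0 - 1) hm (hdecC hc (k0 - 1) hneg)).1
          rwa [show k0 - 1 + 1 = k0 by omega] at h3
      obtain ⟨qv, hq1, hq2⟩ := hqP (k0 - 1)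
      have hTv : Tᵀ *ᵥ v = 0 := by
        have h1 : v ∈ LinearMap.ker (Matrix.mulVecLin Tᵀ) := by
          rw [hc.2.2.2.1]
          exact Submodule.mem_span_singleton_self v
        have h2 := LinearMap.mem_ker.mp h1
        rwa [Matrix.mulVecLin_apply] at h2
      have hb2 : b = (1 - Matrix.diagonal qv) *ᵥ x k0 + T *ᵥ (Matrix.diagonal qv *ᵥ x k0) := by
        rw [← hsolK, hq1, Matrix.add_mulVec, ← Matrix.mulVec_mulVec]
      have hentry : ∀ i, ((1 - Matrix.diagonal qv) *ᵥ x k0) i = (1 - qv i) * x k0 i := by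
        intro i
        have hdd : (1 : Matrix (Fin n) (Fin n) ℝ) - Matrix.diagonal qv
            = Matrix.diagonal (fun j => 1 - qv j) := by
          rw [← Matrix.diagonal_one, Matrix.diagonal_sub]
        rw [hdd, Matrix.mulVec_diagonal]
      have hzero : ∀ i, (1 - qv i) * x k0 i = 0 := by
        have hdot : v ⬝ᵥ ((1 - Matrix.diagonal qv) *ᵥ x k0) ≤ 0 := by
          have h5 : v ⬝ᵥ b = v ⬝ᵥ ((1 - Matrix.diagonal qv) *ᵥ x k0) := by
            rw [hb2, dotProduct_add]
            have h6 : v ⬝ᵥ (T *ᵥ (Matrix.diagonal qv *ᵥ x k0)) = 0 := by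
              rw [Matrix.dotProduct_mulVec, ← Matrix.mulVec_transpose, hTv,
                zero_dotProduct]
            rw [h6, add_zero]
          rw [← h5]
          exact hvb
        have hterm : ∀ i ∈ Finset.univ, (0:ℝ) ≤ v i * ((1 - qv i) * x k0 i) := by
          intro i _
          refine mul_nonneg (le_of_lt (hc.2.1 i)) (mul_nonneg ?_ (hk0pos i))
          rcases hq2 i with h | h <;> rw [h] <;> norm_num
        have hsum0 : ∑ i, v i * ((1 - qv i) * x k0 i) = 0 := by
          refine le_antisymm ?_ (Finset.sum_nonneg hterm)
          have h7 : ∑ i, v i * ((1 - qv i) * x k0 i)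
              = v ⬝ᵥ ((1 - Matrix.diagonal qv) *ᵥ x k0) := by
            rw [dotProduct]
            exact Finset.sum_congr rfl fun i _ => by rw [hentry i]
          rw [h7]
          exact hdot
        intro i
        have h8 := (Finset.sum_eq_zero_iff_of_nonneg hterm).mp hsum0 i (Finset.mem_univ i)
        rcases mul_eq_zero.mp h8 with h | h
        · exact absurd h (ne_of_gt (hc.2.1 i))
        · exact h
      have h0vec : (1 - Matrix.diagonal qv) *ᵥ x k0 = 0 := by
        funext i
        rw [hentry i, hzero i]
        rfl
      have hqx : Matrix.diagonal qv *ᵥ x k0 = x k0 := by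
        funext i
        rw [Matrix.mulVec_diagonal]
        have h9 := hzero i
        rcases hq2 i with h | h
        · rw [h] at h9 ⊢
          rw [zero_mul]
          rw [sub_zero, one_mul] at h9
          exact h9.symm
        · rw [h, one_mul]
      have hk0eq : k0 - 1 + 1 = k0 := by omega
      refine ⟨k0 - 1, by omega, ?_, ?_⟩
      · rw [hk0eq, hPk k0 hk01, Stmt10Aux.Pmat_eq_one hk0pos, hq1]
        exact h0vec
      · rw [hk0eq, Stmt10Aux.Pmat_eq_one hk0pos]
        rw [sub_self, zero_add, mul_one]
        rw [hb2, h0vec, hqx, zero_add]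
end

section
/- Let T be an n×n real M-matrix. Then for every b ∈ ℝⁿ the piecewise linear system [I − P(x) + T·P(x)]·x = b has a unique solution x ∈ ℝⁿ. -/
open Matrix Filter

/- ### Auxiliary material -/

attribute [local instance] Matrix.linftyOpNormedAddCommGroup Matrix.linftyOpNormedSpace
  Matrix.linftyOpNormedRing Matrix.linftyOpNormedAlgebra

namespace Stmt12Aux

lemma entry_nonneg_mul {n : ℕ} {A C : Matrix (Fin n) (Fin n) ℝ}
    (hA : ∀ i j, 0 ≤ A i j) (hC : ∀ i j, 0 ≤ C i j) : ∀ i j, 0 ≤ (A * C) i j := by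
  intro i j
  rw [Matrix.mul_apply]
  exact Finset.sum_nonneg fun k _ => mul_nonneg (hA i k) (hC k j)

lemma entry_nonneg_pow {n : ℕ} {A : Matrix (Fin n) (Fin n) ℝ}
    (hA : ∀ i j, 0 ≤ A i j) : ∀ m, ∀ i j, 0 ≤ (A ^ m) i j := by
  intro m
  induction m with
  | zero =>
      intro i j
      rw [pow_zero, Matrix.one_apply]
      split_ifs <;> norm_num
  | succ k ih =>
      rw [pow_succ]
      exact entry_nonneg_mul ih hA

lemma norm_map_complex {n : ℕ} (M : Matrix (Fin n) (Fin n) ℝ) :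
    ‖M.map (fun a => (a : ℂ))‖ = ‖M‖ := by
  rw [Matrix.linfty_opNorm_def, Matrix.linfty_opNorm_def]
  congr 1
  apply Finset.sup_congr rfl
  intro i _
  congr 1
  ext j
  simp [Matrix.map_apply]

lemma map_complex_pow {n : ℕ} (M : Matrix (Fin n) (Fin n) ℝ) (m : ℕ) :
    (M.map (fun a => (a : ℂ))) ^ m = (M ^ m).map (fun a => (a : ℂ)) := by
  have h : ∀ N : Matrix (Fin n) (Fin n) ℝ,
      N.map (fun a => (a : ℂ)) = Complex.ofRealHom.mapMatrix N := fun N => rfl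
  rw [h, h, ← map_pow]

/-- Key consequence of `specRad B < α`: there is an entrywise positive vector `w`
with `B *ᵥ w < α • w` entrywise. -/
lemma exists_contraction_vec {n : ℕ} (hn : 0 < n) (B : Matrix (Fin n) (Fin n) ℝ)
    (hB : ∀ i j, 0 ≤ B i j) {α : ℝ} (hα : specRad B < α) :
    0 < α ∧ ∃ w : Fin n → ℝ, (∀ i, 1 ≤ w i) ∧ ∀ i, (B *ᵥ w) i < α * w i := by
  haveI : Nonempty (Fin n) := ⟨⟨0, hn⟩⟩
  set Bc : Matrix (Fin n) (Fin n) ℂ := B.map (fun a => (a : ℂ)) with hBcdef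
  haveI : Nontrivial (Matrix (Fin n) (Fin n) ℂ) := by
    refine ⟨0, 1, fun h => ?_⟩
    have := congrFun (congrFun h ⟨0, hn⟩) ⟨0, hn⟩
    simp [Matrix.one_apply] at this
  haveI : CompleteSpace (Matrix (Fin n) (Fin n) ℂ) := FiniteDimensional.complete ℂ _
  have hbdd : BddAbove {r : ℝ | ∃ μ ∈ spectrum ℂ Bc, r = ‖μ‖} := by
    refine ⟨‖Bc‖, ?_⟩
    rintro r ⟨μ, hμ, rfl⟩
    simpa using spectrum.norm_le_norm_of_mem hμ
  have hmem : ∀ μ ∈ spectrum ℂ Bc, ‖μ‖ ≤ specRad B := fun μ hμ =>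
    le_csSup hbdd ⟨μ, hμ, rfl⟩
  obtain ⟨μ₀, hμ₀⟩ := spectrum.nonempty Bc
  have hsr0 : 0 ≤ specRad B := le_trans (norm_nonneg μ₀) (hmem μ₀ hμ₀)
  have hα0 : 0 < α := lt_of_le_of_lt hsr0 hα
  refine ⟨hα0, ?_⟩
  -- spectral radius bound
  have hρ : spectralRadius ℂ Bc < ENNReal.ofReal α := by
    have h1 : spectralRadius ℂ Bc ≤ ENNReal.ofReal (specRad B) := by
      rw [spectralRadius]
      refine iSup₂_le fun μ hμ => ?_
      rw [← ENNReal.ofReal_coe_nnreal, coe_nnnorm]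
      exact ENNReal.ofReal_le_ofReal (by simpa using hmem μ hμ)
    exact lt_of_le_of_lt h1 ((ENNReal.ofReal_lt_ofReal_iff hα0).2 hα)
  -- Gelfand formula: find m with ‖Bc ^ m‖ < α ^ m
  have hg := spectrum.pow_nnnorm_pow_one_div_tendsto_nhds_spectralRadius Bc
  have hev : ∀ᶠ k : ℕ in atTop, (‖Bc ^ k‖₊ : ENNReal) ^ (1 / (k : ℝ)) < ENNReal.ofReal α :=
    hg.eventually_lt_const hρ
  obtain ⟨m, hmm, hm1⟩ := (hev.and (eventually_ge_atTop 1)).exists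
  have hmpos : (0 : ℝ) < (m : ℝ) := by exact_mod_cast hm1
  have h2 : (‖Bc ^ m‖₊ : ENNReal) < ENNReal.ofReal (α ^ m) := by
    have h := ENNReal.rpow_lt_rpow hmm hmpos
    rw [← ENNReal.rpow_mul, one_div, inv_mul_cancel₀ (ne_of_gt hmpos), ENNReal.rpow_one] at h
    calc (‖Bc ^ m‖₊ : ENNReal) < (ENNReal.ofReal α) ^ (m : ℝ) := h
      _ = ENNReal.ofReal (α ^ (m : ℝ)) := ENNReal.ofReal_rpow_of_pos hα0
      _ = ENNReal.ofReal (α ^ m) := by rw [Real.rpow_natCast]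
  have h3 : ‖Bc ^ m‖ < α ^ m := by
    rw [← ENNReal.ofReal_coe_nnreal, coe_nnnorm] at h2
    exact (ENNReal.ofReal_lt_ofReal_iff_of_nonneg (norm_nonneg _)).1 h2
  have h4 : ‖B ^ m‖ < α ^ m := by
    rw [← norm_map_complex, ← map_complex_pow]
    exact h3
  -- the real matrix E = α⁻¹ • B and F = E ^ m with ‖F‖ < 1
  set E : Matrix (Fin n) (Fin n) ℝ := α⁻¹ • B with hEdef
  have hEnn : ∀ i j, 0 ≤ E i j := by
    intro i j
    rw [hEdef, Matrix.smul_apply, smul_eq_mul]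
    exact mul_nonneg (inv_nonneg.2 hα0.le) (hB i j)
  have hF : ‖E ^ m‖ < 1 := by
    rw [hEdef, smul_pow, norm_smul, norm_pow, Real.norm_eq_abs,
      abs_of_nonneg (inv_nonneg.2 hα0.le)]
    have h5 : (α⁻¹) ^ m * ‖B ^ m‖ < (α⁻¹) ^ m * α ^ m :=
      mul_lt_mul_of_pos_left h4 (pow_pos (inv_pos.2 hα0) m)
    calc (α⁻¹) ^ m * ‖B ^ m‖ < (α⁻¹) ^ m * α ^ m := h5
      _ = 1 := by rw [inv_pow, inv_mul_cancel₀ (pow_ne_zero m hα0.ne')]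
  haveI : CompleteSpace (Matrix (Fin n) (Fin n) ℝ) := FiniteDimensional.complete ℝ _
  set F : Matrix (Fin n) (Fin n) ℝ := E ^ m with hFdef
  have hFnn : ∀ i j, 0 ≤ F i j := entry_nonneg_pow hEnn m
  set S : Matrix (Fin n) (Fin n) ℝ := ∑' k : ℕ, F ^ k with hSdef
  have hgeom : (1 - F) * S = 1 := mul_neg_geom_series F hF
  have hSnn : ∀ i j, 0 ≤ S i j := by
    intro i j
    have hsum : HasSum (fun k : ℕ => F ^ k) S :=
      (summable_geometric_of_norm_lt_one hF).hasSum
    have hcont : Continuous fun M : Matrix (Fin n) (Fin n) ℝ => M i j :=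
      (continuous_apply j).comp (continuous_apply i)
    have ht : Tendsto (fun N : ℕ => (∑ k ∈ Finset.range N, F ^ k) i j)
        atTop (nhds (S i j)) :=
      ((hcont.tendsto S).comp hsum.tendsto_sum_nat)
    refine ge_of_tendsto' ht fun N => ?_
    rw [Matrix.sum_apply]
    exact Finset.sum_nonneg fun k _ => entry_nonneg_pow hFnn k i j
  set G : Matrix (Fin n) (Fin n) ℝ := (∑ j ∈ Finset.range m, E ^ j) * S with hGdef
  have hGnn : ∀ i j, 0 ≤ G i j := by
    refine entry_nonneg_mul (fun i j => ?_) hSnn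
    rw [Matrix.sum_apply]
    exact Finset.sum_nonneg fun k _ => entry_nonneg_pow hEnn k i j
  have hGinv : (1 - E) * G = 1 := by
    have h5 : (1 - E) * (∑ j ∈ Finset.range m, E ^ j) = 1 - F := by
      calc (1 - E) * (∑ j ∈ Finset.range m, E ^ j)
          = -((E - 1) * ∑ j ∈ Finset.range m, E ^ j) := by rw [← neg_mul, neg_sub]
        _ = -(E ^ m - 1) := by rw [mul_geom_sum]
        _ = 1 - F := by rw [neg_sub, hFdef]
    rw [hGdef, ← mul_assoc, h5, hgeom]
  refine ⟨G *ᵥ (fun _ => 1), ?_, ?_⟩ <;>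
    [skip; skip]
  all_goals {
    have hw0 : ∀ i, 0 ≤ (G *ᵥ (fun _ => (1:ℝ))) i := by
      intro i
      rw [Matrix.mulVec, dotProduct]
      refine Finset.sum_nonneg fun j _ => ?_
      exact mul_nonneg (hGnn i j) zero_le_one
    have hEw0 : ∀ i, 0 ≤ (E *ᵥ (G *ᵥ (fun _ => (1:ℝ)))) i := by
      intro i
      rw [Matrix.mulVec, dotProduct]
      refine Finset.sum_nonneg fun j _ => ?_
      exact mul_nonneg (hEnn i j) (hw0 j)
    have hkey : ∀ i, (G *ᵥ (fun _ => (1:ℝ))) i - (E *ᵥ (G *ᵥ (fun _ => (1:ℝ)))) i = 1 := by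
      intro i
      have h6 : (1 - E) *ᵥ (G *ᵥ (fun _ => (1:ℝ))) = fun _ => (1:ℝ) := by
        rw [Matrix.mulVec_mulVec, hGinv, Matrix.one_mulVec]
      have h7 := congrFun h6 i
      rw [Matrix.sub_mulVec] at h7
      simpa [Matrix.one_mulVec] using h7
    have hBw : ∀ i, (B *ᵥ (G *ᵥ (fun _ => (1:ℝ)))) i
        = α * (E *ᵥ (G *ᵥ (fun _ => (1:ℝ)))) i := by
      intro i
      have hBE : B = α • E := by
        rw [hEdef, smul_smul, mul_inv_cancel₀ hα0.ne', one_smul]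
      rw [hBE, Matrix.smul_mulVec, Pi.smul_apply, smul_eq_mul]
    first
      | (intro i; have := hkey i; have := hEw0 i; linarith)
      | (intro i
         rw [hBw i]
         have h8 := hkey i
         have h9 := hEw0 i
         nlinarith [hα0])
  }


/-- The fixed-point map whose fixed points are the positive parts of solutions. -/
noncomputable def Hmap {n : ℕ} (α : ℝ) (B : Matrix (Fin n) (Fin n) ℝ) (b : Fin n → ℝ)
    (u : Fin n → ℝ) : Fin n → ℝ := fun i => α⁻¹ * max ((B *ᵥ u) i + b i) 0

/-- Existence and uniqueness of the fixed point of `Hmap`, via the Banach fixed point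
theorem in a weighted sup norm. -/
lemma Hfix {n : ℕ} (hn : 0 < n) {α : ℝ} (hα0 : 0 < α) (B : Matrix (Fin n) (Fin n) ℝ)
    (hB : ∀ i j, 0 ≤ B i j) (b : Fin n → ℝ) {w : Fin n → ℝ} (hw1 : ∀ i, 1 ≤ w i)
    (hBw : ∀ i, (B *ᵥ w) i < α * w i) :
    ∃ u₀ : Fin n → ℝ, Hmap α B b u₀ = u₀ ∧ ∀ u, Hmap α B b u = u → u = u₀ := by
  have hw0 : ∀ i, 0 < w i := fun i => lt_of_lt_of_le one_pos (hw1 i)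
  have hune : (Finset.univ : Finset (Fin n)).Nonempty := ⟨⟨0, hn⟩, Finset.mem_univ _⟩
  set q : ℝ := Finset.univ.sup' hune (fun i => (B *ᵥ w) i / (α * w i)) with hqdef
  have hq1 : q < 1 := by
    rw [hqdef, Finset.sup'_lt_iff]
    intro i _
    exact (div_lt_one (mul_pos hα0 (hw0 i))).2 (hBw i)
  have hq0 : 0 ≤ q := by
    refine le_trans ?_ (Finset.le_sup' (fun i => (B *ᵥ w) i / (α * w i))
      (Finset.mem_univ (⟨0, hn⟩ : Fin n)))
    apply div_nonneg ?_ (mul_pos hα0 (hw0 _)).le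
    rw [Matrix.mulVec, dotProduct]
    exact Finset.sum_nonneg fun j _ => mul_nonneg (hB _ j) (hw0 j).le
  have hqle : ∀ i, (B *ᵥ w) i ≤ q * (α * w i) := by
    intro i
    have h := Finset.le_sup' (fun i => (B *ᵥ w) i / (α * w i)) (Finset.mem_univ i)
    exact (div_le_iff₀ (mul_pos hα0 (hw0 i))).1 h
  set K : (Fin n → ℝ) → (Fin n → ℝ) :=
    fun y i => (w i)⁻¹ * Hmap α B b (fun j => w j * y j) i with hKdef
  have hKlip : LipschitzWith (Real.toNNReal q) K := by
    apply LipschitzWith.of_dist_le_mul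
    intro y z
    rw [Real.coe_toNNReal q hq0, dist_pi_le_iff (mul_nonneg hq0 dist_nonneg)]
    intro i
    have e1 : K y i - K z i = (w i)⁻¹ * α⁻¹ *
        (max ((B *ᵥ fun j => w j * y j) i + b i) 0
          - max ((B *ᵥ fun j => w j * z j) i + b i) 0) := by
      simp only [hKdef, Hmap]; ring
    have e2 : |max ((B *ᵥ fun j => w j * y j) i + b i) 0
          - max ((B *ᵥ fun j => w j * z j) i + b i) 0|
        ≤ |((B *ᵥ fun j => w j * y j) i + b i) - ((B *ᵥ fun j => w j * z j) i + b i)| :=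
      abs_max_sub_max_le_abs _ _ 0
    have e3 : ((B *ᵥ fun j => w j * y j) i + b i) - ((B *ᵥ fun j => w j * z j) i + b i)
        = ∑ j, B i j * w j * (y j - z j) := by
      rw [Matrix.mulVec, Matrix.mulVec, dotProduct, dotProduct,
        add_sub_add_right_eq_sub, ← Finset.sum_sub_distrib]
      exact Finset.sum_congr rfl fun j _ => by ring
    have e4 : |∑ j, B i j * w j * (y j - z j)| ≤ (B *ᵥ w) i * dist y z := by
      calc |∑ j, B i j * w j * (y j - z j)| ≤ ∑ j, |B i j * w j * (y j - z j)| :=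
            Finset.abs_sum_le_sum_abs _ _
        _ ≤ ∑ j, B i j * w j * dist y z := by
            refine Finset.sum_le_sum fun j _ => ?_
            rw [abs_mul, abs_of_nonneg (mul_nonneg (hB i j) (hw0 j).le)]
            refine mul_le_mul_of_nonneg_left ?_ (mul_nonneg (hB i j) (hw0 j).le)
            rw [← Real.dist_eq]
            exact dist_le_pi_dist y z j
        _ = (B *ᵥ w) i * dist y z := by
            rw [← Finset.sum_mul, Matrix.mulVec, dotProduct]
    rw [Real.dist_eq]
    calc |K y i - K z i|
        = (w i)⁻¹ * α⁻¹ * |max ((B *ᵥ fun j => w j * y j) i + b i) 0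
            - max ((B *ᵥ fun j => w j * z j) i + b i) 0| := by
          rw [e1, abs_mul, abs_of_nonneg (mul_nonneg (inv_nonneg.2 (hw0 i).le) (inv_nonneg.2 hα0.le))]
      _ ≤ (w i)⁻¹ * α⁻¹ * ((B *ᵥ w) i * dist y z) := by
          refine mul_le_mul_of_nonneg_left ?_
            (mul_nonneg (inv_nonneg.2 (hw0 i).le) (inv_nonneg.2 hα0.le))
          exact e2.trans (by rw [e3]; exact e4)
      _ ≤ (w i)⁻¹ * α⁻¹ * (q * (α * w i) * dist y z) := by
          refine mul_le_mul_of_nonneg_left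
            (mul_le_mul_of_nonneg_right (hqle i) dist_nonneg)
            (mul_nonneg (inv_nonneg.2 (hw0 i).le) (inv_nonneg.2 hα0.le))
      _ = q * dist y z := by
          have hwne : w i ≠ 0 := (hw0 i).ne'
          have hane : α ≠ 0 := hα0.ne'
          field_simp
  have hCW : ContractingWith (Real.toNNReal q) K := ⟨Real.toNNReal_lt_one.2 hq1, hKlip⟩
  have hy₀ : K (ContractingWith.fixedPoint K hCW) = ContractingWith.fixedPoint K hCW :=
    hCW.fixedPoint_isFixedPt
  set y₀ := ContractingWith.fixedPoint K hCW with hy₀def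
  refine ⟨fun i => w i * y₀ i, ?_, ?_⟩
  · funext i
    have h := congrFun hy₀ i
    simp only [hKdef] at h
    calc Hmap α B b (fun j => w j * y₀ j) i
        = w i * ((w i)⁻¹ * Hmap α B b (fun j => w j * y₀ j) i) := by
          rw [← mul_assoc, mul_inv_cancel₀ (hw0 i).ne', one_mul]
      _ = w i * y₀ i := by rw [h]
  · intro u hu
    have hKy : K (fun i => (w i)⁻¹ * u i) = fun i => (w i)⁻¹ * u i := by
      funext i
      have hwy : (fun j => w j * ((w j)⁻¹ * u j)) = u := by
        funext j
        rw [← mul_assoc, mul_inv_cancel₀ (hw0 j).ne', one_mul]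
      simp only [hKdef]
      rw [hwy, hu]
    have hyy : (fun i => (w i)⁻¹ * u i) = y₀ := hCW.fixedPoint_unique hKy
    funext i
    have h2 := congrFun hyy i
    calc u i = w i * ((w i)⁻¹ * u i) := by
          rw [← mul_assoc, mul_inv_cancel₀ (hw0 i).ne', one_mul]
      _ = w i * y₀ i := by rw [h2]

end Stmt12Aux

/-- If `T` is an M-matrix, the piecewise linear system
`[I − P(x) + T·P(x)]·x = b` has a unique solution for every `b`. -/
theorem stmt12 {n : ℕ} (T : Matrix (Fin n) (Fin n) ℝ) (hT : IsMmat T) (b : Fin n → ℝ) :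
    ∃! x : Fin n → ℝ, (1 - Pmat x + T * Pmat x) *ᵥ x = b := by
  classical
  obtain ⟨α, B, hB, hα, hTdef⟩ := hT
  rcases Nat.eq_zero_or_pos n with hn0 | hn
  · subst hn0
    refine ⟨fun i => i.elim0, ?_, ?_⟩
    · funext i; exact i.elim0
    · intro y _; funext i; exact i.elim0
  obtain ⟨hα0, w, hw1, hBw⟩ := Stmt12Aux.exists_contraction_vec hn B hB hα
  obtain ⟨u₀, hu₀, huniq⟩ := Stmt12Aux.Hfix hn hα0 B hB b hw1 hBw
  have hTv : ∀ (u : Fin n → ℝ) i, (T *ᵥ u) i = α * u i - (B *ᵥ u) i := by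
    intro u i
    rw [hTdef, Matrix.sub_mulVec, Matrix.smul_mulVec, Matrix.one_mulVec]
    simp
  have hPx : ∀ x : Fin n → ℝ, Pmat x *ᵥ x = fun i => max (x i) 0 := by
    intro x; funext i
    rw [Pmat, Matrix.mulVec_diagonal]
    by_cases h : 0 ≤ x i
    · rw [if_pos h, one_mul, max_eq_left h]
    · push_neg at h
      rw [if_neg (not_le.2 h), zero_mul, max_eq_right h.le]
  have hLHS : ∀ x : Fin n → ℝ,
      (1 - Pmat x + T * Pmat x) *ᵥ x
        = fun i => x i - max (x i) 0 + (T *ᵥ fun j => max (x j) 0) i := by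
    intro x; funext i
    rw [Matrix.add_mulVec, Matrix.sub_mulVec, Matrix.one_mulVec, ← Matrix.mulVec_mulVec, hPx]
    simp
  have hu₀nn : ∀ i, 0 ≤ u₀ i := by
    intro i
    rw [← congrFun hu₀ i]
    exact mul_nonneg (inv_nonneg.2 hα0.le) (le_max_right _ _)
  set x₀ : Fin n → ℝ := fun i => u₀ i - ((T *ᵥ u₀) i - b i) with hx₀def
  have hkey : ∀ i, max (x₀ i) 0 = u₀ i := by
    intro i
    have hfix := congrFun hu₀ i
    simp only [Stmt12Aux.Hmap] at hfix
    have hBu : (B *ᵥ u₀) i + b i = α * u₀ i - ((T *ᵥ u₀) i - b i) := by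
      have := hTv u₀ i; linarith
    rw [hBu] at hfix
    set a := u₀ i with hadef
    set c := (T *ᵥ u₀) i - b i with hcdef
    have ha : 0 ≤ a := hu₀nn i
    have h7 : max (α * a - c) 0 = α * a := by
      have h := congrArg (fun t => α * t) hfix
      rw [← mul_assoc, mul_inv_cancel₀ hα0.ne', one_mul] at h
      exact h
    show max (a - c) 0 = a
    rcases lt_or_eq_of_le ha with hpos | heq
    · have hc0 : c = 0 := by
        rcases le_or_gt (α * a - c) 0 with hle | hlt
        · rw [max_eq_right hle] at h7; nlinarith
        · rw [max_eq_left hlt.le] at h7; linarith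
      rw [hc0, sub_zero, max_eq_left hpos.le]
    · have h8 : max (-c) 0 = 0 := by
        rw [← heq] at h7; simpa using h7
      have hc0 : 0 ≤ c := by
        by_contra hcc
        push_neg at hcc
        rw [max_eq_left (by linarith)] at h8
        linarith
      rw [← heq, zero_sub, max_eq_right (by linarith)]
  have hx₀sol : (1 - Pmat x₀ + T * Pmat x₀) *ᵥ x₀ = b := by
    rw [hLHS]
    funext i
    have hpx : (fun j => max (x₀ j) 0) = u₀ := funext hkey
    rw [hpx, hkey i]
    show u₀ i - ((T *ᵥ u₀) i - b i) - u₀ i + (T *ᵥ u₀) i = b i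
    ring
  refine ⟨x₀, hx₀sol, ?_⟩
  intro x hx
  rw [hLHS] at hx
  have he : ∀ i, x i - max (x i) 0 + (T *ᵥ fun j => max (x j) 0) i = b i := congrFun hx
  have hHu : Stmt12Aux.Hmap α B b (fun j => max (x j) 0) = fun j => max (x j) 0 := by
    funext i
    simp only [Stmt12Aux.Hmap]
    have hT' := hTv (fun j => max (x j) 0) i
    have hei := he i
    have hBu : (B *ᵥ fun j => max (x j) 0) i + b i
        = α * max (x i) 0 - (max (x i) 0 - x i) := by linarith
    rw [hBu]
    by_cases hxi : 0 ≤ x i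
    · rw [max_eq_left hxi]
      have h9 : α * x i - (x i - x i) = α * x i := by ring
      rw [h9, max_eq_left (mul_nonneg hα0.le hxi), ← mul_assoc, inv_mul_cancel₀ hα0.ne',
        one_mul]
    · push_neg at hxi
      rw [max_eq_right hxi.le]
      have h9 : α * 0 - (0 - x i) = x i := by ring
      rw [h9, max_eq_right hxi.le, mul_zero]
  have huu : (fun j => max (x j) 0) = u₀ := huniq _ hHu
  funext i
  show x i = u₀ i - ((T *ᵥ u₀) i - b i)
  rw [← huu]
  show x i = max (x i) 0 - ((T *ᵥ fun j => max (x j) 0) i - b i)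
  linarith [he i]
end

section
/- Let T be an irreducible n×n real matrix satisfying condition T2 (null(Tᵀ) = span(v), null(T) = span(w) with v, w > 0 componentwise, and T + D is an M-matrix for every diagonal D ≥ O, D ≠ O), and let b ∈ ℝⁿ with vᵀb < 0. Then the piecewise linear system [I − P(x) + T·P(x)]·x = b has a unique solution x ∈ ℝⁿ. -/
open Matrix

/-! ### Auxiliary lemmas -/

private lemma pls_sumsq {n : ℕ} (L : Matrix (Fin n) (Fin n) ℝ) (z : Fin n → ℝ)
    (hrow : ∀ i, ∑ j, L i j = 0) (hcol : ∀ j, ∑ i, L i j = 0) :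
    ∑ i, ∑ j, L i j * (z i - z j)^2 = -2 * ∑ i, ∑ j, L i j * z i * z j := by
  have expand : ∀ i j, L i j * (z i - z j)^2
      = L i j * z i ^ 2 - 2 * (L i j * z i * z j) + L i j * z j ^ 2 := by
    intro i j; ring
  simp_rw [expand, Finset.sum_add_distrib, Finset.sum_sub_distrib]
  have h1 : ∑ i, ∑ j, L i j * z i ^ 2 = 0 := by
    simp_rw [← Finset.sum_mul, hrow]; simp
  have h2 : ∑ i, ∑ j, L i j * z j ^ 2 = 0 := by
    rw [Finset.sum_comm]; simp_rw [← Finset.sum_mul, hcol]; simp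
  have h3 : ∑ i, ∑ j, 2 * (L i j * z i * z j) = 2 * ∑ i, ∑ j, L i j * z i * z j := by
    simp_rw [Finset.mul_sum]
  rw [h1, h2, h3]; ring

private lemma pls_quad_kernel {n : ℕ} (hn : 0 < n) (T : Matrix (Fin n) (Fin n) ℝ)
    (v w : Fin n → ℝ) (hv : ∀ i, 0 < v i) (hw : ∀ i, 0 < w i)
    (hoff : ∀ i j, i ≠ j → T i j ≤ 0)
    (hTw : T *ᵥ w = 0) (hvT : v ᵥ* T = 0) (hirr : IsIrred T)
    (u : Fin n → ℝ) (hu : ∀ i, u i * (T *ᵥ u) i ≤ 0) :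
    ∃ c : ℝ, u = c • w := by
  set z : Fin n → ℝ := fun i => u i / w i with hz
  set L : Matrix (Fin n) (Fin n) ℝ := fun i j => v i * T i j * w j with hL
  have hwz : ∀ j, w j * z j = u j := fun j => by
    rw [hz]; exact mul_div_cancel₀ (u j) (hw j).ne' |>.symm ▸ by field_simp
  have hLle : ∀ i j, i ≠ j → L i j ≤ 0 := fun i j h =>
    mul_nonpos_of_nonpos_of_nonneg
      (mul_nonpos_of_nonneg_of_nonpos (hv i).le (hoff i j h)) (hw j).le
  have hterm_nonpos : ∀ i j, L i j * (z i - z j)^2 ≤ 0 := by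
    intro i j
    rcases eq_or_ne i j with h | h
    · subst h; simp
    · exact mul_nonpos_of_nonpos_of_nonneg (hLle i j h) (sq_nonneg _)
  have hrow : ∀ i, ∑ j, L i j = 0 := by
    intro i
    have : ∑ j, L i j = v i * (T *ᵥ w) i := by
      simp only [hL, mulVec, dotProduct, Finset.mul_sum]; congr 1; ext j; ring
    rw [this, hTw]; simp
  have hcol : ∀ j, ∑ i, L i j = 0 := by
    intro j
    have : ∑ i, L i j = (v ᵥ* T) j * w j := by
      simp only [hL, vecMul, dotProduct, Finset.sum_mul]
    rw [this, hvT]; simp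
  have hQ : ∑ i, ∑ j, L i j * z i * z j ≤ 0 := by
    have key : ∀ i, ∑ j, L i j * z i * z j = (v i / w i) * (u i * (T *ᵥ u) i) := by
      intro i
      have e1 : ∑ j, L i j * z i * z j = z i * v i * ∑ j, T i j * u j := by
        rw [Finset.mul_sum]; congr 1; ext j
        rw [← hwz j]; simp only [hL]; ring
      rw [e1]
      simp only [mulVec, dotProduct, hz]
      field_simp
    rw [Finset.sum_congr rfl fun i _ => key i]
    apply Finset.sum_nonpos
    intro i _
    exact mul_nonpos_of_nonneg_of_nonpos (div_nonneg (hv i).le (hw i).le) (hu i)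
  have hsum : ∑ i, ∑ j, L i j * (z i - z j)^2 = 0 := by
    have h1 := pls_sumsq L z hrow hcol
    have hle : ∑ i, ∑ j, L i j * (z i - z j)^2 ≤ 0 :=
      Finset.sum_nonpos fun i _ => Finset.sum_nonpos fun j _ => hterm_nonpos i j
    linarith
  have hzero : ∀ i j, i ≠ j → T i j ≠ 0 → z i = z j := by
    intro i j hij hT0
    have hterm : ∑ j', L i j' * (z i - z j')^2 = 0 :=
      (Finset.sum_eq_zero_iff_of_nonpos (fun k _ =>
        Finset.sum_nonpos fun j' _ => hterm_nonpos k j')).mp hsum i (Finset.mem_univ i)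
    have hterm2 : L i j * (z i - z j)^2 = 0 :=
      (Finset.sum_eq_zero_iff_of_nonpos (fun j' _ => hterm_nonpos i j')).mp
        hterm j (Finset.mem_univ j)
    have hTlt : T i j < 0 := lt_of_le_of_ne (hoff i j hij) hT0
    have hLlt : L i j < 0 :=
      mul_neg_of_neg_of_pos (mul_neg_of_pos_of_neg (hv i) hTlt) (hw j)
    have hsq : (z i - z j)^2 = 0 := by
      rcases mul_eq_zero.mp hterm2 with h | h
      · exact absurd h hLlt.ne
      · exact h
    have := pow_eq_zero_iff (n := 2) (by norm_num) |>.mp hsq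
    linarith [sub_eq_zero.mp this]
  obtain ⟨i₀⟩ : Nonempty (Fin n) := ⟨⟨0, hn⟩⟩
  have hconst : ∀ i, z i = z i₀ := by
    by_contra hcon
    push_neg at hcon
    obtain ⟨i₁, hi₁⟩ := hcon
    set S : Finset (Fin n) := Finset.univ.filter (fun i => z i = z i₀) with hS
    have hSne : S.Nonempty := ⟨i₀, by simp [hS]⟩
    have hSneq : S ≠ Finset.univ := by
      intro h
      have : i₁ ∈ S := h ▸ Finset.mem_univ i₁
      simp [hS] at this
      exact hi₁ this
    obtain ⟨i, hiS, j, hjS, hTij⟩ := hirr S hSne hSneq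
    have hzi : z i = z i₀ := by simpa [hS] using hiS
    have hij : i ≠ j := by rintro rfl; exact hjS hiS
    have := hzero i j hij hTij
    exact hjS (by simp [hS, ← this, hzi])
  refine ⟨z i₀, funext fun i => ?_⟩
  rw [← hwz i, hconst i, Pi.smul_apply, smul_eq_mul, mul_comm]

private lemma pls_sys_iff {n : ℕ} (T : Matrix (Fin n) (Fin n) ℝ) (x b : Fin n → ℝ) :
    (1 - Pmat x + T * Pmat x) *ᵥ x = b ↔
      T *ᵥ (fun i => max (x i) 0) + (x - fun i => max (x i) 0) = b := by
  have hP : Pmat x *ᵥ x = fun i => max (x i) 0 := by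
    funext i
    rw [Pmat, mulVec_diagonal]
    rcases le_or_gt 0 (x i) with h | h
    · simp [h, max_eq_left h]
    · simp [not_le.mpr h, max_eq_right h.le]
  rw [add_mulVec, sub_mulVec, one_mulVec, ← mulVec_mulVec, hP]
  constructor <;> intro h <;> rw [← h] <;> funext i <;> simp <;> ring

private lemma pls_range_eq {n : ℕ} (hn : 0 < n) (T : Matrix (Fin n) (Fin n) ℝ)
    (v w : Fin n → ℝ) (hv : ∀ i, 0 < v i) (hw : ∀ i, 0 < w i)
    (hker : LinearMap.ker (Matrix.mulVecLin T) = Submodule.span ℝ {w})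
    (hvT : v ᵥ* T = 0)
    (y : Fin n → ℝ) (hy : v ⬝ᵥ y = 0) : ∃ u, T *ᵥ u = y := by
  set f : (Fin n → ℝ) →ₗ[ℝ] ℝ :=
    { toFun := fun y => v ⬝ᵥ y
      map_add' := fun a b => dotProduct_add v a b
      map_smul' := fun c a => by simp [dotProduct_smul] } with hf
  have hwne : w ≠ 0 := fun h => (hw ⟨0, hn⟩).ne' (by rw [h]; rfl)
  have hker1 : Module.finrank ℝ (LinearMap.ker (Matrix.mulVecLin T)) = 1 := by
    rw [hker]; exact finrank_span_singleton hwne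
  have hrn := LinearMap.finrank_range_add_finrank_ker (Matrix.mulVecLin T)
  have hdim : Module.finrank ℝ (Fin n → ℝ) = n := by simp
  have hfw : f w ≠ 0 := by
    simp only [hf, LinearMap.coe_mk, AddHom.coe_mk]
    have : 0 < v ⬝ᵥ w := by
      apply Finset.sum_pos
      · intro i _; exact mul_pos (hv i) (hw i)
      · exact ⟨⟨0, hn⟩, Finset.mem_univ _⟩
    exact this.ne'
  have hfsurj : LinearMap.range f = ⊤ := by
    rw [LinearMap.range_eq_top]
    intro r
    exact ⟨(r / f w) • w, by rw [LinearMap.map_smul, smul_eq_mul, div_mul_cancel₀ r hfw]⟩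
  have hkerf : Module.finrank ℝ (LinearMap.ker f) + 1 = n := by
    have := LinearMap.finrank_range_add_finrank_ker f
    rw [hfsurj] at this
    simp at this
    omega
  have hle : LinearMap.range (Matrix.mulVecLin T) ≤ LinearMap.ker f := by
    rintro _ ⟨u, rfl⟩
    simp only [LinearMap.mem_ker, hf, LinearMap.coe_mk, AddHom.coe_mk,
      Matrix.mulVecLin_apply]
    rw [dotProduct_mulVec, hvT, zero_dotProduct]
  have heq : LinearMap.range (Matrix.mulVecLin T) = LinearMap.ker f := by
    apply Submodule.eq_of_le_of_finrank_eq hle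
    rw [hdim] at hrn
    omega
  have : y ∈ LinearMap.range (Matrix.mulVecLin T) := by
    rw [heq]; simpa [hf] using hy
  obtain ⟨u, hu⟩ := this
  exact ⟨u, hu⟩

/-- The feasible set of the associated linear complementarity problem. -/
def pls_Feas {n : ℕ} (T : Matrix (Fin n) (Fin n) ℝ) (b : Fin n → ℝ) : Set (Fin n → ℝ) :=
  {u | (∀ i, 0 ≤ u i) ∧ ∀ i, b i ≤ (T *ᵥ u) i}

private lemma pls_min_mem {n : ℕ} (T : Matrix (Fin n) (Fin n) ℝ) (b : Fin n → ℝ)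
    (hoff : ∀ i j, i ≠ j → T i j ≤ 0) {u u' : Fin n → ℝ}
    (hu : u ∈ pls_Feas T b) (hu' : u' ∈ pls_Feas T b) :
    (fun i => min (u i) (u' i)) ∈ pls_Feas T b := by
  obtain ⟨hu1, hu2⟩ := hu
  obtain ⟨hu'1, hu'2⟩ := hu'
  refine ⟨fun i => le_min (hu1 i) (hu'1 i), fun i => ?_⟩
  rcases le_total (u i) (u' i) with h | h
  · calc b i ≤ (T *ᵥ u) i := hu2 i
      _ ≤ (T *ᵥ fun k => min (u k) (u' k)) i := by
        simp only [mulVec, dotProduct]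
        apply Finset.sum_le_sum
        intro j _
        rcases eq_or_ne j i with rfl | hji
        · rw [min_eq_left h]
        · exact mul_le_mul_of_nonpos_left (min_le_left _ _) (hoff i j (Ne.symm hji))
  · calc b i ≤ (T *ᵥ u') i := hu'2 i
      _ ≤ (T *ᵥ fun k => min (u k) (u' k)) i := by
        simp only [mulVec, dotProduct]
        apply Finset.sum_le_sum
        intro j _
        rcases eq_or_ne j i with rfl | hji
        · rw [min_eq_right h]
        · exact mul_le_mul_of_nonpos_left (min_le_right _ _) (hoff i j (Ne.symm hji))

private lemma pls_inf'_mem {n : ℕ} (T : Matrix (Fin n) (Fin n) ℝ) (b : Fin n → ℝ)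
    (hoff : ∀ i j, i ≠ j → T i j ≤ 0) {ι : Type*} (s : Finset ι)
    (hs : s.Nonempty) (g : ι → (Fin n → ℝ)) (hg : ∀ j ∈ s, g j ∈ pls_Feas T b) :
    (fun i => s.inf' hs (fun j => g j i)) ∈ pls_Feas T b := by
  induction hs using Finset.Nonempty.cons_induction with
  | singleton a => simpa using hg a (by simp)
  | cons a s ha hsne ih =>
    have h1 : g a ∈ pls_Feas T b := hg a (Finset.mem_cons_self a s)
    have h2 := ih (fun j hj => hg j (Finset.mem_cons_of_mem hj))
    have : (fun i => (Finset.cons a s ha).inf' (Finset.cons_nonempty ha) fun j => g j i)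
        = fun i => min (g a i) (s.inf' hsne fun j => g j i) := by
      funext i
      rw [Finset.inf'_cons]
    rw [this]
    exact pls_min_mem T b hoff h1 h2

private lemma pls_feas_closed {n : ℕ} (T : Matrix (Fin n) (Fin n) ℝ) (b : Fin n → ℝ) :
    IsClosed (pls_Feas T b) := by
  have : pls_Feas T b
      = (⋂ i, {u : Fin n → ℝ | 0 ≤ u i}) ∩ ⋂ i, {u | b i ≤ (T *ᵥ u) i} := by
    ext u; simp [pls_Feas, Set.mem_iInter, forall_and]
  rw [this]
  apply IsClosed.inter
  · exact isClosed_iInter fun i => isClosed_le continuous_const (continuous_apply i)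
  · refine isClosed_iInter fun i => isClosed_le continuous_const ?_
    exact (continuous_apply i).comp (Matrix.mulVecLin T).continuous_of_finiteDimensional

private lemma pls_least_mem {n : ℕ} (hn : 0 < n) (T : Matrix (Fin n) (Fin n) ℝ)
    (b : Fin n → ℝ) (hoff : ∀ i j, i ≠ j → T i j ≤ 0) (hne : (pls_Feas T b).Nonempty) :
    ∃ m ∈ pls_Feas T b, ∀ u ∈ pls_Feas T b, ∀ i, m i ≤ u i := by
  set m : Fin n → ℝ := fun i => sInf ((fun u => u i) '' pls_Feas T b) with hm
  have hbdd : ∀ i, BddBelow ((fun u : Fin n → ℝ => u i) '' pls_Feas T b) := by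
    intro i
    exact ⟨0, fun x ⟨u, hu, he⟩ => he ▸ hu.1 i⟩
  have hSne : ∀ i, ((fun u : Fin n → ℝ => u i) '' pls_Feas T b).Nonempty :=
    fun i => hne.image _
  have hmle : ∀ u ∈ pls_Feas T b, ∀ i, m i ≤ u i := by
    intro u hu i
    exact csInf_le (hbdd i) ⟨u, hu, rfl⟩
  refine ⟨m, ?_, hmle⟩
  have : m ∈ closure (pls_Feas T b) := by
    rw [Metric.mem_closure_iff]
    intro ε hε
    have hhalf : 0 < ε / 2 := by linarith
    have hchoice : ∀ i : Fin n, ∃ u ∈ pls_Feas T b, u i < m i + ε / 2 := by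
      intro i
      have hlt : sInf ((fun u : Fin n → ℝ => u i) '' pls_Feas T b) < m i + ε / 2 := by
        have : m i = sInf ((fun u : Fin n → ℝ => u i) '' pls_Feas T b) := rfl
        linarith
      obtain ⟨x, ⟨u, hu, rfl⟩, hx⟩ := (csInf_lt_iff (hbdd i) (hSne i)).mp hlt
      exact ⟨u, hu, hx⟩
    choose g hg1 hg2 using hchoice
    have huniv : (Finset.univ : Finset (Fin n)).Nonempty := ⟨⟨0, hn⟩, Finset.mem_univ _⟩
    set U : Fin n → ℝ := fun i => Finset.univ.inf' huniv (fun j => g j i) with hU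
    have hUmem : U ∈ pls_Feas T b := pls_inf'_mem T b hoff _ huniv g (fun j _ => hg1 j)
    refine ⟨U, hUmem, ?_⟩
    rw [dist_pi_lt_iff hε]
    intro i
    have h1 : m i ≤ U i := hmle U hUmem i
    have h2 : U i ≤ g i i := Finset.inf'_le _ (Finset.mem_univ i)
    rw [Real.dist_eq, abs_lt]
    constructor <;> [linarith [hg2 i]; linarith [hg2 i]]
  rwa [(pls_feas_closed T b).closure_eq] at this

private lemma pls_compl_least {n : ℕ} (T : Matrix (Fin n) (Fin n) ℝ) (b : Fin n → ℝ)
    (hoff : ∀ i j, i ≠ j → T i j ≤ 0) {m : Fin n → ℝ} (hm : m ∈ pls_Feas T b)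
    (hleast : ∀ u ∈ pls_Feas T b, ∀ i, m i ≤ u i) :
    ∀ i, m i * ((T *ᵥ m) i - b i) = 0 := by
  intro i
  by_contra hcon
  have hmi : 0 < m i := lt_of_le_of_ne (hm.1 i) (by
    intro h; exact hcon (by rw [← h]; ring))
  have hsl : 0 < (T *ᵥ m) i - b i := lt_of_le_of_ne (by linarith [hm.2 i]) (by
    intro h; exact hcon (by rw [← h]; ring))
  set δ := (T *ᵥ m) i - b i with hδ
  set A := |T i i| with hA
  have hA0 : 0 ≤ A := abs_nonneg _
  set ε := min (m i) (δ / (A + 1)) with hε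
  have hε0 : 0 < ε := lt_min hmi (div_pos hsl (by linarith))
  have hεm : ε ≤ m i := min_le_left _ _
  have hεδ : ε * (A + 1) ≤ δ := by
    have h1 : ε ≤ δ / (A + 1) := min_le_right _ _
    exact (le_div_iff₀ (by linarith)).mp h1
  set m' : Fin n → ℝ := fun k => if k = i then m i - ε else m k with hm'
  have hTm' : ∀ k, (T *ᵥ m') k = (T *ᵥ m) k - ε * T k i := by
    intro k
    simp only [mulVec, dotProduct, hm']
    have : ∀ j, T k j * (if j = i then m i - ε else m j)
        = T k j * m j - (if j = i then ε * T k j else 0) := by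
      intro j; split <;> simp_all <;> ring
    rw [Finset.sum_congr rfl fun j _ => this j, Finset.sum_sub_distrib,
      Finset.sum_ite_eq' Finset.univ i (fun j => ε * T k j)]
    simp
  have hmem : m' ∈ pls_Feas T b := by
    constructor
    · intro k
      simp only [hm']
      split
      · linarith
      · exact hm.1 k
    · intro k
      rw [hTm' k]
      rcases eq_or_ne k i with rfl | hki
      · have h2 : T k k ≤ A := le_abs_self _
        have h3 : ε * T k k ≤ ε * A := mul_le_mul_of_nonneg_left h2 hε0.le
        have h4 : ε * A ≤ ε * (A + 1) := by nlinarith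
        have : ε * T k k ≤ δ := by linarith
        simp only [hδ] at this ⊢
        linarith
      · have h2 : T k i ≤ 0 := hoff k i hki
        have : 0 ≤ -(ε * T k i) := by nlinarith
        linarith [hm.2 k]
  have := hleast m' hmem i
  simp only [hm', if_pos rfl] at this
  linarith

/-- If `T` is irreducible satisfying condition T2 and `vᵀb < 0`, then the
piecewise linear system `[I − P(x) + T·P(x)]·x = b` has a unique solution. -/
theorem stmt13 {n : ℕ} (T : Matrix (Fin n) (Fin n) ℝ) (v w : Fin n → ℝ)
    (hT : CondT2 T v w) (b : Fin n → ℝ) (hvb : v ⬝ᵥ b < 0) :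
    ∃! x : Fin n → ℝ, (1 - Pmat x + T * Pmat x) *ᵥ x = b := by
  obtain ⟨hirr, hv, hw, hkv, hkw, hM⟩ := hT
  have hn : 0 < n := by
    rcases Nat.eq_zero_or_pos n with h | h
    · subst h; simp [dotProduct] at hvb
    · exact h
  have i₀ : Fin n := ⟨0, hn⟩
  -- basic consequences
  have hvT : v ᵥ* T = 0 := by
    have hvmem : v ∈ LinearMap.ker (Matrix.mulVecLin Tᵀ) :=
      hkv ▸ Submodule.mem_span_singleton_self v
    simpa [Matrix.mulVecLin_apply] using hvmem
  have hTw : T *ᵥ w = 0 := by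
    have hwmem : w ∈ LinearMap.ker (Matrix.mulVecLin T) :=
      hkw ▸ Submodule.mem_span_singleton_self w
    simpa [Matrix.mulVecLin_apply] using hwmem
  have hoff : ∀ i j, i ≠ j → T i j ≤ 0 := by
    obtain ⟨α, B, hB, _, hEq⟩ := hM (fun _ => 1) (fun _ => zero_le_one) (by
      intro h
      have := congrFun h i₀
      norm_num at this)
    intro i j hij
    have h2 := congrFun (congrFun hEq i) j
    simp [Matrix.add_apply, Matrix.diagonal_apply_ne _ hij, Matrix.sub_apply,
      Matrix.smul_apply, Matrix.one_apply_ne hij] at h2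
    linarith [hB i j]
  have hvdot : ∀ u : Fin n → ℝ, v ⬝ᵥ (T *ᵥ u) = 0 := fun u => by
    rw [dotProduct_mulVec, hvT, zero_dotProduct]
  -- uniqueness
  have uniq : ∀ x y : Fin n → ℝ,
      (1 - Pmat x + T * Pmat x) *ᵥ x = b → (1 - Pmat y + T * Pmat y) *ᵥ y = b → x = y := by
    intro x y hx hy
    rw [pls_sys_iff] at hx hy
    set xp : Fin n → ℝ := fun i => max (x i) 0 with hxp
    set yp : Fin n → ℝ := fun i => max (y i) 0 with hyp
    set u : Fin n → ℝ := xp - yp with hu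
    have hTu : T *ᵥ u = (xp - x) - (yp - y) := by
      rw [hu, Matrix.mulVec_sub]
      have e1 : T *ᵥ xp = b - (x - xp) := by rw [← hx]; abel
      have e2 : T *ᵥ yp = b - (y - yp) := by rw [← hy]; abel
      rw [e1, e2]; abel
    have hprod : ∀ i, u i * (T *ᵥ u) i ≤ 0 := by
      intro i
      rw [hTu]
      have hxpx : x i ≤ xp i := le_max_left _ _
      have hypy : y i ≤ yp i := le_max_left _ _
      have hxp0 : 0 ≤ xp i := le_max_right _ _
      have hyp0 : 0 ≤ yp i := le_max_right _ _
      rcases lt_trichotomy (u i) 0 with h | h | h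
      · -- xp i < yp i, so yp i > 0, hence y i > 0 and yp i = y i
        have hlt : xp i < yp i := by
          have : xp i - yp i < 0 := h
          linarith
        have hypos : 0 < yp i := lt_of_le_of_lt hxp0 hlt
        have hyipos : 0 < y i := by
          by_contra hc
          push_neg at hc
          have : yp i = 0 := by simp [hyp, max_eq_right hc]
          linarith
        have : yp i = y i := by simp [hyp, max_eq_left hyipos.le]
        have hge : 0 ≤ (xp - x) i - (yp - y) i := by
          simp only [Pi.sub_apply]
          linarith
        exact mul_nonpos_of_nonpos_of_nonneg h.le hge
      · rw [h]; simp
      · have hlt : yp i < xp i := by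
          have : 0 < xp i - yp i := h
          linarith
        have hxpos : 0 < xp i := lt_of_le_of_lt hyp0 hlt
        have hxipos : 0 < x i := by
          by_contra hc
          push_neg at hc
          have : xp i = 0 := by simp [hxp, max_eq_right hc]
          linarith
        have : xp i = x i := by simp [hxp, max_eq_left hxipos.le]
        have hle : (xp - x) i - (yp - y) i ≤ 0 := by
          simp only [Pi.sub_apply]
          linarith
        exact mul_nonpos_of_nonneg_of_nonpos h.le hle
    obtain ⟨c, hc⟩ := pls_quad_kernel hn T v w hv hw hoff hTw hvT hirr u hprod
    have hTu0 : T *ᵥ u = 0 := by rw [hc, Matrix.mulVec_smul, hTw, smul_zero]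
    have hneg : ∀ i, xp i - x i = yp i - y i := by
      intro i
      have := congrFun (hTu0 ▸ hTu) i
      have h0 : ((xp - x) - (yp - y)) i = 0 := by rw [← hTu, hTu0]; rfl
      simp only [Pi.sub_apply] at h0
      linarith
    have hups : ∀ i, xp i = yp i + c * w i := by
      intro i
      have := congrFun hc i
      simp only [hu, Pi.sub_apply, Pi.smul_apply, smul_eq_mul] at this
      linarith
    rcases lt_trichotomy c 0 with hclt | hc0 | hcgt
    · exfalso
      -- yp i = xp i - c w i > 0 for all i, so y > 0, y⁻ = 0, hence x⁻ = 0, b = T yp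
      have hyppos : ∀ i, 0 < yp i := by
        intro i
        have h1 := hups i
        have hxp0 : 0 ≤ xp i := le_max_right _ _
        nlinarith [hw i]
      have hyy : ∀ i, yp i = y i := by
        intro i
        by_contra hcne
        have : y i < 0 ∨ 0 ≤ y i := lt_or_ge _ _
        rcases this with h | h
        · have : yp i = 0 := by simp [hyp, max_eq_right h.le]
          linarith [hyppos i]
        · exact hcne (by simp [hyp, max_eq_left h])
      have hb : T *ᵥ yp = b := by
        rw [← hy]
        have : y - yp = 0 := by
          funext i; simp [Pi.sub_apply, (hyy i).symm]
        rw [this]; abel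
      have := hvdot yp
      rw [hb] at this
      linarith
    · -- c = 0 : xp = yp, then x = y
      have hxy : ∀ i, xp i = yp i := fun i => by
        have := hups i; rw [hc0] at this; linarith
      funext i
      have h1 := hneg i
      have h2 := hxy i
      linarith
    · exfalso
      have hxppos : ∀ i, 0 < xp i := by
        intro i
        have h1 := hups i
        have hyp0 : 0 ≤ yp i := le_max_right _ _
        nlinarith [hw i]
      have hxx : ∀ i, xp i = x i := by
        intro i
        by_contra hcne
        rcases lt_or_ge (x i) 0 with h | h
        · have : xp i = 0 := by simp [hxp, max_eq_right h.le]
          linarith [hxppos i]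
        · exact hcne (by simp [hxp, max_eq_left h])
      have hb : T *ᵥ xp = b := by
        rw [← hx]
        have : x - xp = 0 := by
          funext i; simp [Pi.sub_apply, (hxx i).symm]
        rw [this]; abel
      have := hvdot xp
      rw [hb] at this
      linarith
  -- existence
  have hex : ∃ x : Fin n → ℝ, (1 - Pmat x + T * Pmat x) *ᵥ x = b := by
    set c₀ : ℝ := -(v ⬝ᵥ b) / v i₀ with hc₀
    have hc₀pos : 0 < c₀ := div_pos (by linarith) (hv i₀)
    set y₀ : Fin n → ℝ := b + c₀ • (Pi.single i₀ 1 : Fin n → ℝ) with hy₀def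
    have hy₀ : v ⬝ᵥ y₀ = 0 := by
      rw [hy₀def, dotProduct_add, dotProduct_smul]
      have : v ⬝ᵥ Pi.single i₀ 1 = v i₀ := by simp [dotProduct_single]
      rw [this, hc₀, smul_eq_mul]
      field_simp [(hv i₀).ne']
      ring
    have hy₀b : ∀ i, b i ≤ y₀ i := by
      intro i
      simp only [hy₀def, Pi.add_apply, Pi.smul_apply, smul_eq_mul]
      have : 0 ≤ (Pi.single i₀ 1 : Fin n → ℝ) i := by
        rcases eq_or_ne i i₀ with rfl | h
        · simp
        · simp [Pi.single_eq_of_ne h]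
      nlinarith
    obtain ⟨u₁, hu₁⟩ := pls_range_eq hn T v w hv hw hkw hvT y₀ hy₀
    have huniv : (Finset.univ : Finset (Fin n)).Nonempty := ⟨i₀, Finset.mem_univ _⟩
    set t : ℝ := Finset.univ.sup' huniv (fun i => -u₁ i / w i) with ht
    set u₀ : Fin n → ℝ := u₁ + t • w with hu₀def
    have hu₀ : u₀ ∈ pls_Feas T b := by
      constructor
      · intro i
        have h1 : -u₁ i / w i ≤ t := Finset.le_sup' (fun i => -u₁ i / w i) (Finset.mem_univ i)
        have h2 : -u₁ i ≤ t * w i := by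
          rw [div_le_iff₀ (hw i)] at h1
          linarith
        simp only [hu₀def, Pi.add_apply, Pi.smul_apply, smul_eq_mul]
        linarith
      · intro i
        have : T *ᵥ u₀ = y₀ := by
          rw [hu₀def, Matrix.mulVec_add, Matrix.mulVec_smul, hTw, smul_zero, add_zero, hu₁]
        rw [this]
        exact hy₀b i
    obtain ⟨m, hmF, hleast⟩ := pls_least_mem hn T b hoff ⟨u₀, hu₀⟩
    have hcompl := pls_compl_least T b hoff hmF hleast
    set s : Fin n → ℝ := fun i => (T *ᵥ m) i - b i with hs
    have hs0 : ∀ i, 0 ≤ s i := fun i => by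
      simp only [hs]; linarith [hmF.2 i]
    set x : Fin n → ℝ := fun i => m i - s i with hx
    have hxpm : (fun i => max (x i) 0) = m := by
      funext i
      rcases mul_eq_zero.mp (hcompl i) with h | h
      · have hxi : x i ≤ 0 := by
          simp only [hx, h]; linarith [hs0 i]
        rw [max_eq_right hxi, h]
      · have hsi : s i = 0 := by simp only [hs]; linarith [hs0 i, h.le, h.ge]
        have hxi : x i = m i := by simp only [hx, hsi]; ring
        rw [hxi, max_eq_left (hmF.1 i)]
    refine ⟨x, ?_⟩
    rw [pls_sys_iff, hxpm]
    funext i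
    simp only [Pi.add_apply, Pi.sub_apply, hx, hs]
    ring
  obtain ⟨x, hx⟩ := hex
  exact ⟨x, hx, fun y hy => uniq y x hy hx⟩
end

section
/- Let T be an irreducible n×n real matrix satisfying condition T2 (null(Tᵀ) = span(v), null(T) = span(w) with v, w > 0 componentwise, and T + D is an M-matrix for every diagonal D ≥ O, D ≠ O), and let b ∈ ℝⁿ with vᵀb = 0. Then the piecewise linear system [I − P(x) + T·P(x)]·x = b has a solution, but the solution is not unique: every solution x satisfies P(x) = I, there exists a solution x* with min_i x*_i = 0, and the set of all solutions is exactly {x* + α·w : α ≥ 0}. -/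
open Matrix

/-- If `x ≥ 0` componentwise then `P(x)` is the identity. -/
lemma Pmat_eq_one {n : ℕ} {x : Fin n → ℝ} (hx : ∀ i, 0 ≤ x i) : Pmat x = 1 := by
  unfold Pmat
  rw [show (fun i => if 0 ≤ x i then (1:ℝ) else 0) = fun _ => (1:ℝ) from
    funext fun i => if_pos (hx i), Matrix.diagonal_one]

/-- Key equivalence: `x` solves the piecewise system iff `x ≥ 0` and `T x = b`. -/
lemma sol_iff {n : ℕ} (T : Matrix (Fin n) (Fin n) ℝ) (v : Fin n → ℝ)
    (hv : ∀ i, 0 < v i) (hvT : ∀ z : Fin n → ℝ, v ⬝ᵥ (T *ᵥ z) = 0)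
    (b : Fin n → ℝ) (hvb : v ⬝ᵥ b = 0) (x : Fin n → ℝ) :
    (1 - Pmat x + T * Pmat x) *ᵥ x = b ↔ (∀ i, 0 ≤ x i) ∧ T *ᵥ x = b := by
  constructor
  · intro hsol
    set y : Fin n → ℝ := (Pmat x) *ᵥ x with hy
    have hyi : ∀ i, y i = if 0 ≤ x i then x i else 0 := by
      intro i
      simp [hy, Pmat, Matrix.mulVec_diagonal, ite_mul]
    have heq : x - y + T *ᵥ y = b := by
      rw [← hsol, Matrix.add_mulVec, Matrix.sub_mulVec, Matrix.one_mulVec,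
        ← Matrix.mulVec_mulVec]
    have hdot : v ⬝ᵥ (x - y) = 0 := by
      have := congrArg (fun u => v ⬝ᵥ u) heq
      change v ⬝ᵥ (x - y + T *ᵥ y) = v ⬝ᵥ b at this
      rw [dotProduct_add, hvT y, add_zero] at this
      rw [this, hvb]
    have hterm : ∀ i ∈ Finset.univ, v i * (x i - y i) ≤ 0 := by
      intro i _
      rcases le_or_gt 0 (x i) with h | h
      · simp [hyi i, h]
      · have : x i - y i < 0 := by simp [hyi i, not_le.2 h, h]
        exact le_of_lt (mul_neg_of_pos_of_neg (hv i) this)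
    have hzero : ∀ i ∈ Finset.univ, v i * (x i - y i) = 0 := by
      rw [← Finset.sum_eq_zero_iff_of_nonpos hterm]
      simpa [dotProduct] using hdot
    have hxnn : ∀ i, 0 ≤ x i := by
      intro i
      by_contra h
      push_neg at h
      have h0 := hzero i (Finset.mem_univ i)
      have : x i - y i = 0 := by
        rcases mul_eq_zero.1 h0 with h' | h'
        · exact absurd h' (ne_of_gt (hv i))
        · exact h'
      rw [hyi i, if_neg (not_le.2 h), sub_zero] at this
      exact absurd this (ne_of_lt h)
    have hxy : y = x := by
      funext i
      rw [hyi i, if_pos (hxnn i)]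
    refine ⟨hxnn, ?_⟩
    have : x - x + T *ᵥ x = b := by rw [← hxy] at heq ⊢; exact heq
    simpa using this
  · rintro ⟨hxnn, hTx⟩
    rw [Pmat_eq_one hxnn]
    simpa using hTx

/-- If `T` is irreducible satisfying condition T2 and `vᵀb = 0`, the
piecewise linear system `[I − P(x) + T·P(x)]·x = b` has a solution, but not a unique one:
every solution `x` satisfies `P(x) = I`, there is a solution `x*` with `minᵢ x*ᵢ = 0`,
and the set of all solutions is exactly `{x* + α·w : α ≥ 0}`. -/
theorem stmt14 {n : ℕ} (hn : 0 < n) (T : Matrix (Fin n) (Fin n) ℝ) (v w : Fin n → ℝ)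
    (hT : CondT2 T v w) (b : Fin n → ℝ) (hvb : v ⬝ᵥ b = 0) :
    (∀ x : Fin n → ℝ, (1 - Pmat x + T * Pmat x) *ᵥ x = b → Pmat x = 1) ∧
    (∃ x y : Fin n → ℝ, (1 - Pmat x + T * Pmat x) *ᵥ x = b ∧
      (1 - Pmat y + T * Pmat y) *ᵥ y = b ∧ x ≠ y) ∧
    ∃ xs : Fin n → ℝ, (1 - Pmat xs + T * Pmat xs) *ᵥ xs = b ∧
      (∀ i, 0 ≤ xs i) ∧ (∃ i, xs i = 0) ∧
      ∀ x : Fin n → ℝ,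
        (1 - Pmat x + T * Pmat x) *ᵥ x = b ↔ ∃ α : ℝ, 0 ≤ α ∧ x = xs + α • w := by
  obtain ⟨-, hv, hw, hkerT', hkerT, -⟩ := hT
  -- v is in the kernel of Tᵀ
  have hvker : v ᵥ* T = 0 := by
    have : v ∈ LinearMap.ker (Matrix.mulVecLin Tᵀ) := by
      rw [hkerT']; exact Submodule.mem_span_singleton_self v
    simpa [Matrix.mulVecLin_apply, Matrix.mulVec_transpose] using this
  have hvT : ∀ z : Fin n → ℝ, v ⬝ᵥ (T *ᵥ z) = 0 := by
    intro z
    rw [Matrix.dotProduct_mulVec, hvker, zero_dotProduct]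
  -- w is in the kernel of T
  have hwker : T *ᵥ w = 0 := by
    have : w ∈ LinearMap.ker (Matrix.mulVecLin T) := by
      rw [hkerT]; exact Submodule.mem_span_singleton_self w
    simpa [Matrix.mulVecLin_apply] using this
  have hw0 : w ≠ 0 := by
    intro h
    have := hw ⟨0, hn⟩
    rw [h] at this
    exact lt_irrefl 0 this
  -- the linear functional u ↦ v ⬝ᵥ u
  set f : (Fin n → ℝ) →ₗ[ℝ] ℝ :=
    { toFun := fun u => v ⬝ᵥ u
      map_add' := fun a c => dotProduct_add v a c
      map_smul' := fun a c => by simp [dotProduct_smul] } with hf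
  have hvv : 0 < v ⬝ᵥ v := by
    have : (0:ℝ) < ∑ i, v i * v i :=
      Finset.sum_pos (fun i _ => mul_pos (hv i) (hv i)) ⟨⟨0, hn⟩, Finset.mem_univ _⟩
    simpa [dotProduct] using this
  have hfsurj : Function.Surjective f := by
    intro c
    refine ⟨(c / (v ⬝ᵥ v)) • v, ?_⟩
    show v ⬝ᵥ ((c / (v ⬝ᵥ v)) • v) = c
    rw [dotProduct_smul, smul_eq_mul, div_mul_cancel₀ _ (ne_of_gt hvv)]
  have hrangef : LinearMap.range f = ⊤ := LinearMap.range_eq_top.2 hfsurj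
  -- finrank computations
  have hfr : Module.finrank ℝ (Fin n → ℝ) = n := by
    rw [Module.finrank_pi, Fintype.card_fin]
  have hkerf : Module.finrank ℝ (LinearMap.ker f) = n - 1 := by
    have h1 := LinearMap.finrank_range_add_finrank_ker f
    rw [hrangef, hfr] at h1
    simp only [finrank_top, Module.finrank_self] at h1
    omega
  have hrangeT : Module.finrank ℝ (LinearMap.range (Matrix.mulVecLin T)) = n - 1 := by
    have h1 := LinearMap.finrank_range_add_finrank_ker (Matrix.mulVecLin T)
    rw [hkerT, finrank_span_singleton hw0, hfr] at h1
    omega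
  have hle : LinearMap.range (Matrix.mulVecLin T) ≤ LinearMap.ker f := by
    rintro u ⟨z, rfl⟩
    show v ⬝ᵥ (Matrix.mulVecLin T z) = 0
    rw [Matrix.mulVecLin_apply]
    exact hvT z
  have hrange_eq : LinearMap.range (Matrix.mulVecLin T) = LinearMap.ker f :=
    Submodule.eq_of_le_of_finrank_eq hle (by rw [hrangeT, hkerf])
  -- b is in the range of T
  have hbmem : b ∈ LinearMap.range (Matrix.mulVecLin T) := by
    rw [hrange_eq]
    exact hvb
  obtain ⟨x0, hx0⟩ := hbmem
  rw [Matrix.mulVecLin_apply] at hx0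
  -- construct xs by shifting x0 along w
  obtain ⟨i0, -, hi0⟩ := Finset.exists_min_image Finset.univ (fun i => x0 i / w i)
    ⟨⟨0, hn⟩, Finset.mem_univ _⟩
  set c : ℝ := x0 i0 / w i0 with hc
  set xs : Fin n → ℝ := x0 - c • w with hxs
  have hTxs : T *ᵥ xs = b := by
    rw [hxs, Matrix.mulVec_sub, Matrix.mulVec_smul, hwker, smul_zero, sub_zero, hx0]
  have hxsnn : ∀ i, 0 ≤ xs i := by
    intro i
    have h1 : c ≤ x0 i / w i := hi0 i (Finset.mem_univ i)
    have h2 : c * w i ≤ (x0 i / w i) * w i :=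
      mul_le_mul_of_nonneg_right h1 (le_of_lt (hw i))
    rw [div_mul_cancel₀ _ (ne_of_gt (hw i))] at h2
    simp only [hxs, Pi.sub_apply, Pi.smul_apply, smul_eq_mul]
    linarith
  have hxsi0 : xs i0 = 0 := by
    simp only [hxs, Pi.sub_apply, Pi.smul_apply, smul_eq_mul, hc]
    rw [div_mul_cancel₀ _ (ne_of_gt (hw i0))]
    ring
  -- the key characterization
  have hchar : ∀ x : Fin n → ℝ,
      (1 - Pmat x + T * Pmat x) *ᵥ x = b ↔ ∃ α : ℝ, 0 ≤ α ∧ x = xs + α • w := by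
    intro x
    rw [sol_iff T v hv hvT b hvb x]
    constructor
    · rintro ⟨hxnn, hTx⟩
      have hker : x - xs ∈ LinearMap.ker (Matrix.mulVecLin T) := by
        show Matrix.mulVecLin T (x - xs) = 0
        rw [Matrix.mulVecLin_apply, Matrix.mulVec_sub, hTx, hTxs, sub_self]
      rw [hkerT, Submodule.mem_span_singleton] at hker
      obtain ⟨α, hα⟩ := hker
      have hx : x = xs + α • w := by
        have h3 := sub_eq_iff_eq_add.mp hα.symm
        rw [h3, add_comm]
      refine ⟨α, ?_, hx⟩
      have h1 : x i0 = α * w i0 := by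
        rw [hx]; simp [hxsi0]
      have h2 : 0 ≤ α * w i0 := h1 ▸ hxnn i0
      by_contra hcon
      push_neg at hcon
      nlinarith [hw i0]
    · rintro ⟨α, hα, rfl⟩
      refine ⟨fun i => add_nonneg (hxsnn i) (mul_nonneg hα (le_of_lt (hw i))), ?_⟩
      rw [Matrix.mulVec_add, Matrix.mulVec_smul, hwker, smul_zero, add_zero, hTxs]
  -- assemble
  have hsol_xs : (1 - Pmat xs + T * Pmat xs) *ᵥ xs = b :=
    (hchar xs).2 ⟨0, le_refl 0, by simp⟩
  refine ⟨?_, ?_, xs, hsol_xs, hxsnn, ⟨i0, hxsi0⟩, hchar⟩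
  · intro x hx
    exact Pmat_eq_one ((sol_iff T v hv hvT b hvb x).1 hx).1
  · refine ⟨xs, xs + (1:ℝ) • w, hsol_xs, (hchar _).2 ⟨1, zero_le_one, rfl⟩, ?_⟩
    intro h
    have := congrFun h i0
    simp only [Pi.add_apply, Pi.smul_apply, smul_eq_mul, one_mul] at this
    have := hw i0
    linarith [congrFun h i0, hw i0]
end

section
/- Let T be an irreducible n×n real matrix satisfying condition T2 (null(Tᵀ) = span(v), null(T) = span(w) with v, w > 0 componentwise, and T + D is an M-matrix for every diagonal D ≥ O, D ≠ O), and let b ∈ ℝⁿ with vᵀb > 0. Then the piecewise linear system [I − P(x) + T·P(x)]·x = b has no solution. -/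
open Matrix

/-- If `T` is irreducible satisfying condition T2 and `vᵀb > 0`, then the
piecewise linear system `[I − P(x) + T·P(x)]·x = b` has no solution. -/
theorem stmt15 {n : ℕ} (T : Matrix (Fin n) (Fin n) ℝ) (v w : Fin n → ℝ)
    (hT : CondT2 T v w) (b : Fin n → ℝ) (hvb : 0 < v ⬝ᵥ b) :
    ¬ ∃ x : Fin n → ℝ, (1 - Pmat x + T * Pmat x) *ᵥ x = b := by
  obtain ⟨hirr, hv, hw, hker, -, -⟩ := hT
  rintro ⟨x, hx⟩
  have hvT : Tᵀ *ᵥ v = 0 := by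
    have hmem : v ∈ LinearMap.ker (Matrix.mulVecLin Tᵀ) := by
      rw [hker]; exact Submodule.mem_span_singleton_self v
    have := hmem
    rw [LinearMap.mem_ker, Matrix.mulVecLin_apply] at this
    exact this
  have hvTx : ∀ y : Fin n → ℝ, v ⬝ᵥ (T *ᵥ y) = 0 := by
    intro y
    rw [Matrix.dotProduct_mulVec, ← Matrix.mulVec_transpose, hvT, zero_dotProduct]
  have hb : v ⬝ᵥ b = ∑ i, (if 0 ≤ x i then 0 else v i * x i) := by
    rw [← hx]
    rw [Matrix.add_mulVec, Matrix.sub_mulVec, Matrix.one_mulVec,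
      ← Matrix.mulVec_mulVec, dotProduct_add, dotProduct_sub, hvTx, add_zero]
    have hP : Pmat x *ᵥ x = fun i => if 0 ≤ x i then x i else 0 := by
      funext i
      simp [Pmat, Matrix.mulVec_diagonal, ite_mul]
    rw [hP]
    simp only [dotProduct, Pi.sub_apply, mul_sub, ← Finset.sum_sub_distrib]
    apply Finset.sum_congr rfl
    intro i _
    by_cases h : 0 ≤ x i <;> simp [h]
  have hle : v ⬝ᵥ b ≤ 0 := by
    rw [hb]
    apply Finset.sum_nonpos
    intro i _
    by_cases h : 0 ≤ x i
    · simp [h]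
    · simp only [h, if_false]
      push_neg at h
      exact le_of_lt (mul_neg_of_pos_of_neg (hv i) h)
  linarith
end

section
/- Let T be an n×n real matrix and b ∈ ℝⁿ. If x ∈ ℝⁿ satisfies x + T·max{0,x} = b, then the vector y = max{0,x} is a solution of the linear complementarity problem: y + T·y ≥ b (componentwise), y ≥ 0 (componentwise), and yᵀ(y + T·y − b) = 0. -/
open Matrix

/-- If `x` solves `x + T·max{0,x} = b`, then `y = max{0,x}` solves the LCP:
`y + T·y ≥ b`, `y ≥ 0`, `yᵀ(y + T·y − b) = 0`. -/
theorem stmt16 {n : ℕ} (T : Matrix (Fin n) (Fin n) ℝ) (b x : Fin n → ℝ)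
    (h : x + T *ᵥ (fun i => max 0 (x i)) = b) :
    ∀ y : Fin n → ℝ, y = (fun i => max 0 (x i)) →
      (∀ i, b i ≤ (y + T *ᵥ y) i) ∧ (∀ i, 0 ≤ y i) ∧ y ⬝ᵥ (y + T *ᵥ y - b) = 0 := by
  rintro y rfl
  subst h
  refine ⟨fun i => ?_, fun i => le_max_left _ _, ?_⟩
  · simp only [Pi.add_apply]
    have := le_max_left 0 (x i)
    nlinarith [le_max_right 0 (x i)]
  · have : ∀ i, ((fun i => max 0 (x i)) + T *ᵥ (fun i => max 0 (x i))
        - (x + T *ᵥ (fun i => max 0 (x i)))) i = max 0 (x i) - x i := by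
      intro i; simp
    rw [dotProduct]
    apply Finset.sum_eq_zero
    intro i _
    rw [this i]
    rcases le_or_gt (x i) 0 with h|h
    · simp [max_eq_left h]
    · simp [max_eq_right h.le]
end

section
/- Let T be an n×n real M-matrix. Then I + T is an M-matrix, each matrix I + T·Pᵏ in the iteration P⁰ = O, (I + T·Pᵏ)·x^{k+1} = b, Pᵏ = P(xᵏ) is invertible, and the iteration converges in at most n steps to the unique solution of the piecewise linear system [I + T·P(x)]·x = b; moreover, for any diagonal P with O ≤ P ≤ I the identity I + T·P = I − P + (I + T)·P holds, so the iteration coincides with the Newton-type iteration for the matrix I + T. -/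
open Matrix

section Auxiliary

open Filter Topology
open scoped ENNReal NNReal

lemma specRad_nonneg {n : ℕ} (B : Matrix (Fin n) (Fin n) ℝ) : 0 ≤ specRad B :=
  Real.sSup_nonneg (by rintro r ⟨μ, _, rfl⟩; exact norm_nonneg _)

section Normed

attribute [local instance] Matrix.linftyOpNormedRing Matrix.linftyOpNormedAlgebra

lemma abs_le_specRad {n : ℕ} (B : Matrix (Fin n) (Fin n) ℝ) {μ : ℂ}
    (hμ : μ ∈ spectrum ℂ (B.map (fun a => (a : ℂ)))) : ‖μ‖ ≤ specRad B := by
  rcases Nat.eq_zero_or_pos n with hn | hn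
  · subst hn
    exact absurd (isUnit_of_subsingleton _) (spectrum.mem_iff.mp hμ)
  · haveI : Nonempty (Fin n) := ⟨⟨0, hn⟩⟩
    haveI : CompleteSpace (Matrix (Fin n) (Fin n) ℂ) := FiniteDimensional.complete ℂ _
    have hbdd : BddAbove {r : ℝ | ∃ μ ∈ spectrum ℂ (B.map (fun a : ℝ => (a : ℂ))), r = ‖μ‖} := by
      refine ⟨‖B.map (fun a : ℝ => (a : ℂ))‖, ?_⟩
      rintro r ⟨ν, hν, rfl⟩
      exact spectrum.norm_le_norm_of_mem hν
    exact le_csSup hbdd ⟨μ, hμ, rfl⟩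

lemma entry_norm_le {n : ℕ} (A : Matrix (Fin n) (Fin n) ℂ) (i j : Fin n) :
    ‖A i j‖ ≤ ‖A‖ := by
  have h1 : ‖A i j‖₊ ≤ ∑ j', ‖A i j'‖₊ :=
    Finset.single_le_sum (f := fun j' => ‖A i j'‖₊) (fun _ _ => zero_le) (Finset.mem_univ j)
  have h2 : (∑ j', ‖A i j'‖₊) ≤ (Finset.univ : Finset (Fin n)).sup fun i => ∑ j', ‖A i j'‖₊ :=
    Finset.le_sup (f := fun i => ∑ j', ‖A i j'‖₊) (Finset.mem_univ i)
  rw [Matrix.linfty_opNorm_def]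
  exact_mod_cast h1.trans h2

lemma pow_entry_tendsto {n : ℕ} (B : Matrix (Fin n) (Fin n) ℝ) {α : ℝ}
    (hspec : specRad B < α) (i j : Fin n) :
    Tendsto (fun k => ((((1 + α)⁻¹) • B) ^ k) i j) atTop (𝓝 0) := by
  have hα : 0 < α := (specRad_nonneg B).trans_lt hspec
  set c : ℝ := (specRad B + α) / 2 with hc
  have hr0 := specRad_nonneg B
  have hc0 : 0 < c := by rw [hc]; linarith
  have hrc : specRad B < c := by rw [hc]; linarith
  have hcα : c < α := by rw [hc]; linarith
  haveI : CompleteSpace (Matrix (Fin n) (Fin n) ℂ) := FiniteDimensional.complete ℂ _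
  set Bc := B.map (fun a : ℝ => (a : ℂ)) with hBc
  have hrad : spectralRadius ℂ Bc < ENNReal.ofReal c := by
    have h1 : spectralRadius ℂ Bc ≤ ENNReal.ofReal (specRad B) := by
      rw [spectralRadius]
      refine iSup₂_le fun μ hμ => ?_
      rw [← enorm_eq_nnnorm, ← ofReal_norm]
      exact ENNReal.ofReal_le_ofReal (by exact abs_le_specRad B hμ)
    exact h1.trans_lt ((ENNReal.ofReal_lt_ofReal_iff hc0).mpr hrc)
  have hG := spectrum.pow_nnnorm_pow_one_div_tendsto_nhds_spectralRadius Bc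
  have hev := hG.eventually_lt_const hrad
  have hnorm : ∀ᶠ k : ℕ in atTop, ‖Bc ^ k‖ ≤ c ^ k := by
    filter_upwards [hev, eventually_ge_atTop 1] with k hk hk1
    have hkne : (k : ℝ) ≠ 0 := Nat.cast_ne_zero.mpr (by omega)
    have h1 : ((‖Bc ^ k‖₊ : ℝ≥0∞) ^ (1 / (k : ℝ))) ^ (k : ℝ) ≤ (ENNReal.ofReal c) ^ (k : ℝ) :=
      ENNReal.rpow_le_rpow hk.le (by positivity)
    rw [← ENNReal.rpow_mul, one_div_mul_cancel hkne, ENNReal.rpow_one,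
      ENNReal.rpow_natCast] at h1
    rw [← ENNReal.ofReal_pow hc0.le, ← enorm_eq_nnnorm, ← ofReal_norm] at h1
    exact (ENNReal.ofReal_le_ofReal_iff (by positivity)).mp h1
  have hmapk : ∀ k : ℕ, Bc ^ k = (B ^ k).map (fun a : ℝ => (a : ℂ)) := by
    intro k
    have hBc' : ∀ M : Matrix (Fin n) (Fin n) ℝ,
        M.map (fun a : ℝ => (a : ℂ)) = Complex.ofRealHom.mapMatrix M := fun _ => rfl
    rw [hBc, hBc', hBc', ← map_pow]
  have hentry : ∀ᶠ k : ℕ in atTop, ‖((((1 + α)⁻¹) • B) ^ k) i j‖ ≤ (c / (1 + α)) ^ k := by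
    filter_upwards [hnorm] with k hk
    have h1 : ((((1 + α)⁻¹) • B) ^ k) i j = ((1 + α)⁻¹) ^ k * (B ^ k) i j := by
      rw [smul_pow]; simp [Matrix.smul_apply, smul_eq_mul]
    have h2 : |(B ^ k) i j| ≤ ‖Bc ^ k‖ := by
      rw [hmapk]
      have h3 : |(B ^ k) i j| = ‖(((B ^ k).map (fun a : ℝ => (a : ℂ))) i j)‖ := by
        simp [Matrix.map_apply, Complex.norm_real, Real.norm_eq_abs]
      rw [h3]
      exact entry_norm_le _ i j
    rw [h1, Real.norm_eq_abs, abs_mul, abs_pow, abs_inv, abs_of_pos (by linarith : (0:ℝ) < 1 + α),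
      div_pow]
    rw [div_eq_mul_inv, mul_comm (c ^ k), ← inv_pow]
    exact mul_le_mul_of_nonneg_left (h2.trans hk) (by positivity)
  exact squeeze_zero_norm' hentry
    (tendsto_pow_atTop_nhds_zero_of_lt_one (by positivity)
      (by rw [div_lt_one (by linarith)]; linarith))

end Normed

lemma neumann {n : ℕ} (C B : Matrix (Fin n) (Fin n) ℝ)
    (hC0 : ∀ i j, 0 ≤ C i j) (hCB : ∀ i j, C i j ≤ B i j)
    (hB0 : ∀ i j, 0 ≤ B i j)
    (hBk : ∀ i j, Tendsto (fun k => (B ^ k) i j) atTop (𝓝 0)) :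
    ∃ N : Matrix (Fin n) (Fin n) ℝ, N * (1 - C) = 1 ∧ (1 - C) * N = 1 ∧ ∀ i j, 0 ≤ N i j := by
  have hpow : ∀ k, ∀ i j, 0 ≤ (C ^ k) i j ∧ (C ^ k) i j ≤ (B ^ k) i j ∧ 0 ≤ (B ^ k) i j := by
    intro k
    induction k with
    | zero =>
      intro i j
      by_cases h : i = j <;> simp [pow_zero, Matrix.one_apply, h]
    | succ k ih =>
      intro i j
      rw [pow_succ, pow_succ, Matrix.mul_apply, Matrix.mul_apply]
      refine ⟨Finset.sum_nonneg fun l _ => mul_nonneg (ih i l).1 (hC0 l j),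
        Finset.sum_le_sum fun l _ => mul_le_mul (ih i l).2.1 (hCB l j) (hC0 l j) (ih i l).2.2,
        Finset.sum_nonneg fun l _ => mul_nonneg (ih i l).2.2 (hB0 l j)⟩
  have hCk : ∀ i j, Tendsto (fun k => (C ^ k) i j) atTop (𝓝 0) := fun i j =>
    squeeze_zero (fun k => (hpow k i j).1) (fun k => (hpow k i j).2.1) (hBk i j)
  have hdet : Tendsto (fun k => (1 - C ^ k : Matrix (Fin n) (Fin n) ℝ).det) atTop (𝓝 (1 : ℝ)) := by
    have h1 : Tendsto (fun k => (1 - C ^ k : Matrix (Fin n) (Fin n) ℝ)) atTop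
        (𝓝 (1 : Matrix (Fin n) (Fin n) ℝ)) := by
      refine tendsto_pi_nhds.mpr fun i => tendsto_pi_nhds.mpr fun j => ?_
      simpa [Matrix.sub_apply] using tendsto_const_nhds.sub (hCk i j)
    have hdc : Continuous fun A : Matrix (Fin n) (Fin n) ℝ => A.det :=
      Continuous.matrix_det continuous_id
    simpa [Matrix.det_one, Function.comp_def] using (hdc.tendsto (1 : Matrix (Fin n) (Fin n) ℝ)).comp h1
  obtain ⟨m, hm⟩ := (hdet.eventually_ne one_ne_zero).exists
  have hgs : ∀ k : ℕ, (1 - C) * (∑ i ∈ Finset.range k, C ^ i) = 1 - C ^ k := by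
    intro k
    calc (1 - C) * (∑ i ∈ Finset.range k, C ^ i)
        = -((C - 1) * ∑ i ∈ Finset.range k, C ^ i) := by rw [← neg_sub C 1, neg_mul]
      _ = -(C ^ k - 1) := by rw [mul_geom_sum]
      _ = 1 - C ^ k := by rw [neg_sub]
  have hunit : IsUnit (1 - C : Matrix (Fin n) (Fin n) ℝ) := by
    refine (Matrix.isUnit_iff_isUnit_det _).mpr (isUnit_iff_ne_zero.mpr fun h0 => hm ?_)
    rw [← hgs m, Matrix.det_mul, h0, zero_mul]
  obtain ⟨u, hu'⟩ := hunit
  set N : Matrix (Fin n) (Fin n) ℝ := ↑u⁻¹ with hN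
  have hSm : ∀ k : ℕ, (∑ l ∈ Finset.range k, C ^ l) = N - N * C ^ k := by
    intro k
    calc (∑ l ∈ Finset.range k, C ^ l)
        = (N * ↑u) * ∑ l ∈ Finset.range k, C ^ l := by
          rw [Units.inv_mul, one_mul]
      _ = N * ((1 - C) * ∑ l ∈ Finset.range k, C ^ l) := by rw [hu', mul_assoc]
      _ = N * (1 - C ^ k) := by rw [hgs k]
      _ = N - N * C ^ k := by rw [mul_sub, mul_one]
  refine ⟨N, by rw [hN, ← hu', Units.inv_mul], by rw [hN, ← hu', Units.mul_inv], ?_⟩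
  intro i j
  have h2 : Tendsto (fun k => (N * C ^ k) i j) atTop (𝓝 0) := by
    simp only [Matrix.mul_apply]
    have := tendsto_finset_sum Finset.univ
      fun l (_ : l ∈ Finset.univ) => (hCk l j).const_mul (N i l)
    simpa using this
  have hlim : Tendsto (fun k => (∑ l ∈ Finset.range k, C ^ l) i j) atTop (𝓝 (N i j)) := by
    have h3 : ∀ k : ℕ, (∑ l ∈ Finset.range k, C ^ l) i j = N i j - (N * C ^ k) i j := by
      intro k; rw [hSm k]; simp [Matrix.sub_apply]
    simp only [h3]
    simpa using tendsto_const_nhds.sub h2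
  refine ge_of_tendsto' hlim fun k => ?_
  rw [Matrix.sum_apply]
  exact Finset.sum_nonneg fun l _ => (hpow l i j).1

lemma mkey {n : ℕ} {T : Matrix (Fin n) (Fin n) ℝ} (hT : IsMmat T) (d : Fin n → ℝ)
    (hd : ∀ i, 0 ≤ d i ∧ d i ≤ 1) :
    ∃ N : Matrix (Fin n) (Fin n) ℝ, N * (1 + T * Matrix.diagonal d) = 1 ∧
      (1 + T * Matrix.diagonal d) * N = 1 ∧ ∀ i j, 0 ≤ N i j := by
  obtain ⟨α, B, hB0, hρ, rfl⟩ := hT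
  have hα : 0 < α := (specRad_nonneg B).trans_lt hρ
  set e : Fin n → ℝ := fun i => 1 + α * d i with he
  have he0 : ∀ i, 0 < e i := fun i => by
    have h1 := (hd i).1
    have : 0 ≤ α * d i := mul_nonneg hα.le h1
    simp only [he]; linarith
  set C := B * Matrix.diagonal (fun i => d i * (e i)⁻¹) with hC
  set B₁ := (1 + α)⁻¹ • B with hB₁
  have hCapp : ∀ i j, C i j = B i j * (d j * (e j)⁻¹) := by
    intro i j; rw [hC, Matrix.mul_diagonal]
  have hB₁app : ∀ i j, B₁ i j = (1 + α)⁻¹ * B i j := by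
    intro i j; rw [hB₁, Matrix.smul_apply, smul_eq_mul]
  have hC0 : ∀ i j, 0 ≤ C i j := by
    intro i j; rw [hCapp]
    exact mul_nonneg (hB0 i j) (mul_nonneg (hd j).1 (inv_nonneg.mpr (he0 j).le))
  have hCB : ∀ i j, C i j ≤ B₁ i j := by
    intro i j; rw [hCapp, hB₁app]
    have hkey : d j * (e j)⁻¹ ≤ (1 + α)⁻¹ := by
      rw [← div_eq_mul_inv, ← one_div, div_le_div_iff₀ (he0 j) (by linarith)]
      have h1 := (hd j).1
      have h2 := (hd j).2
      simp only [he]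
      nlinarith
    calc B i j * (d j * (e j)⁻¹) ≤ B i j * (1 + α)⁻¹ :=
          mul_le_mul_of_nonneg_left hkey (hB0 i j)
      _ = (1 + α)⁻¹ * B i j := mul_comm _ _
  have hB₁0 : ∀ i j, 0 ≤ B₁ i j := by
    intro i j; rw [hB₁app]
    exact mul_nonneg (inv_nonneg.mpr (by linarith)) (hB0 i j)
  obtain ⟨N₀, hN₀l, hN₀r, hN₀0⟩ :=
    neumann C B₁ hC0 hCB hB₁0 (fun i j => pow_entry_tendsto B hρ i j)
  have hdiagE : Matrix.diagonal (fun i => (e i)⁻¹) * Matrix.diagonal e = 1 := by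
    rw [Matrix.diagonal_mul_diagonal,
      show (fun i => (e i)⁻¹ * e i) = fun _ => (1 : ℝ) from
        funext fun i => inv_mul_cancel₀ (he0 i).ne', Matrix.diagonal_one]
  have hdiagE' : Matrix.diagonal e * Matrix.diagonal (fun i => (e i)⁻¹) = 1 := by
    rw [Matrix.diagonal_mul_diagonal,
      show (fun i => e i * (e i)⁻¹) = fun _ => (1 : ℝ) from
        funext fun i => mul_inv_cancel₀ (he0 i).ne', Matrix.diagonal_one]
  have hfact : 1 + (α • (1 : Matrix (Fin n) (Fin n) ℝ) - B) * Matrix.diagonal d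
      = (1 - C) * Matrix.diagonal e := by
    have h1 : Matrix.diagonal e = 1 + α • Matrix.diagonal d := by
      rw [← Matrix.diagonal_one, ← Matrix.diagonal_smul, ← Matrix.diagonal_add]
      congr 1
    have h2 : C * Matrix.diagonal e = B * Matrix.diagonal d := by
      rw [hC, Matrix.mul_assoc, Matrix.diagonal_mul_diagonal,
        show (fun i => d i * (e i)⁻¹ * e i) = d from
          funext fun i => by rw [mul_assoc, inv_mul_cancel₀ (he0 i).ne', mul_one]]
    have hL : 1 + (α • (1 : Matrix (Fin n) (Fin n) ℝ) - B) * Matrix.diagonal d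
        = 1 + α • Matrix.diagonal d - B * Matrix.diagonal d := by
      rw [Matrix.sub_mul, Matrix.smul_mul, Matrix.one_mul, add_sub_assoc]
    have hR : (1 - C) * Matrix.diagonal e
        = 1 + α • Matrix.diagonal d - B * Matrix.diagonal d := by
      rw [Matrix.sub_mul, Matrix.one_mul, h2, h1]
    rw [hL, hR]
  refine ⟨Matrix.diagonal (fun i => (e i)⁻¹) * N₀, ?_, ?_, ?_⟩
  · calc Matrix.diagonal (fun i => (e i)⁻¹) * N₀ * (1 + (α • 1 - B) * Matrix.diagonal d)
        = Matrix.diagonal (fun i => (e i)⁻¹) * (N₀ * (1 - C)) * Matrix.diagonal e := by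
          rw [hfact]; noncomm_ring
      _ = 1 := by rw [hN₀l, Matrix.mul_one, hdiagE]
  · calc (1 + (α • 1 - B) * Matrix.diagonal d) * (Matrix.diagonal (fun i => (e i)⁻¹) * N₀)
        = (1 - C) * (Matrix.diagonal e * Matrix.diagonal (fun i => (e i)⁻¹)) * N₀ := by
          rw [hfact]; noncomm_ring
      _ = 1 := by rw [hdiagE', Matrix.mul_one, hN₀r]
  · intro i j
    rw [Matrix.diagonal_mul]
    exact mul_nonneg (inv_nonneg.mpr (he0 i).le) (hN₀0 i j)

lemma gdiff {s t : ℝ} (h : s ≤ t) :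
    0 ≤ (if 0 ≤ t then (1 : ℝ) else 0) * t - (if 0 ≤ s then (1 : ℝ) else 0) * s ∧
    (if 0 ≤ t then (1 : ℝ) else 0) * t - (if 0 ≤ s then (1 : ℝ) else 0) * s ≤ t - s := by
  split_ifs with h1 h2 h2 <;> constructor <;> [skip; skip; skip; skip; skip; skip; skip; skip] <;>
    simp only [one_mul, zero_mul] <;> linarith

end Auxiliary

/-- If `T` is an M-matrix, then `I + T` is an M-matrix; for any diagonal
`P` with `O ≤ P ≤ I` one has `I + T·P = I − P + (I + T)·P` (so the iteration coincides
with the Newton-type iteration for `I + T`); and along the iteration `P⁰ = O`,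
`(I + T·Pᵏ)·x^{k+1} = b`, `Pᵏ = P(xᵏ)`, every matrix `I + T·Pᵏ` is invertible and the
iteration converges in at most `n` steps to the unique solution of `[I + T·P(x)]·x = b`. -/
theorem stmt18 {n : ℕ} (T : Matrix (Fin n) (Fin n) ℝ) (hT : IsMmat T) (b : Fin n → ℝ) :
    IsMmat (1 + T) ∧
    (∀ p : Fin n → ℝ, (∀ i, 0 ≤ p i ∧ p i ≤ 1) →
      1 + T * Matrix.diagonal p =
        1 - Matrix.diagonal p + (1 + T) * Matrix.diagonal p) ∧
    ∀ (x : ℕ → Fin n → ℝ) (P : ℕ → Matrix (Fin n) (Fin n) ℝ),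
      P 0 = 0 → (∀ k, 1 ≤ k → P k = Pmat (x k)) →
      (∀ k, (1 + T * P k) *ᵥ x (k + 1) = b) →
      (∀ k, IsUnit (1 + T * P k)) ∧
      ∃ k ≤ n, (P (k + 1) - P k) *ᵥ x (k + 1) = 0 ∧
        (1 + T * Pmat (x (k + 1))) *ᵥ x (k + 1) = b ∧
        ∀ z : Fin n → ℝ, (1 + T * Pmat z) *ᵥ z = b → z = x (k + 1) := by
  refine ⟨?_, ?_, ?_⟩
  · -- I + T is an M-matrix
    obtain ⟨α, B, hB0, hρ, hTeq⟩ := hT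
    refine ⟨α + 1, B, hB0, by linarith, ?_⟩
    rw [hTeq, add_smul, one_smul]
    abel
  · -- Newton form identity
    intro p _
    rw [add_mul, one_mul]
    abel
  · -- the iteration
    intro x P hP0 hPk hiter
    set q : ℕ → Fin n → ℝ :=
      fun k i => if k = 0 then 0 else if 0 ≤ x k i then 1 else 0 with hqdef
    have hPq : ∀ k, P k = Matrix.diagonal (q k) := by
      intro k
      cases k with
      | zero =>
        rw [hP0, hqdef]
        simp [Matrix.diagonal_zero]
      | succ k =>
        rw [hPk (k + 1) (Nat.succ_le_succ (Nat.zero_le k)), Pmat, hqdef]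
        simp
    have hq0 : ∀ k i, 0 ≤ q k i := by
      intro k i; rw [hqdef]; dsimp only; split_ifs <;> norm_num
    have hq1 : ∀ k i, q k i ≤ 1 := by
      intro k i; rw [hqdef]; dsimp only; split_ifs <;> norm_num
    have hkey : ∀ k, ∃ N : Matrix (Fin n) (Fin n) ℝ,
        N * (1 + T * P k) = 1 ∧ (1 + T * P k) * N = 1 ∧ ∀ i j, 0 ≤ N i j := by
      intro k; rw [hPq k]; exact mkey hT (q k) (fun i => ⟨hq0 k i, hq1 k i⟩)
    have hunit : ∀ k, IsUnit (1 + T * P k) := by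
      intro k
      obtain ⟨N, h1, h2, _⟩ := hkey k
      exact ⟨⟨1 + T * P k, N, h2, h1⟩, rfl⟩
    refine ⟨hunit, ?_⟩
    have hcancel : ∀ k (u v : Fin n → ℝ),
        (1 + T * P k) *ᵥ u = (1 + T * P k) *ᵥ v → u = v := by
      intro k u v huv
      obtain ⟨N, h1, _, _⟩ := hkey k
      have h2 := congrArg (fun w => N *ᵥ w) huv
      simpa [Matrix.mulVec_mulVec, h1, Matrix.one_mulVec] using h2
    have hTP : ∀ (m : ℕ) (v : Fin n → ℝ),
        (1 + T * P m) *ᵥ v = v + T *ᵥ (P m *ᵥ v) := by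
      intro m v
      rw [Matrix.add_mulVec, Matrix.one_mulVec, ← Matrix.mulVec_mulVec]
    -- monotonicity of the active sets
    have hmono : ∀ k i, q k i ≤ q (k + 1) i := by
      intro k
      induction k with
      | zero =>
        intro i
        rw [show q 0 i = 0 from by simp [hqdef]]
        exact hq0 1 i
      | succ k ih =>
        intro i
        by_cases hx : 0 ≤ x (k + 1) i
        · suffices hs : 0 ≤ x (k + 2) i by
            have e1 : q (k + 1) i = 1 := by rw [hqdef]; simp [hx]
            have e2 : q (k + 2) i = 1 := by rw [hqdef]; simp [hs]
            rw [e1, e2]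
          obtain ⟨N, hN1, hN2, hN0⟩ := hkey (k + 1)
          set y : Fin n → ℝ := fun j => (q (k + 1) j - q k j) * x (k + 1) j with hy
          have hq1k : ∀ j, 0 ≤ x (k + 1) j → q (k + 1) j = 1 := by
            intro j hj; rw [hqdef]; simp [hj]
          have hq0k : ∀ j, ¬ 0 ≤ x (k + 1) j → q (k + 1) j = 0 ∧ q k j = 0 := by
            intro j hj
            have h1 : q (k + 1) j = 0 := by rw [hqdef]; simp [hj]
            exact ⟨h1, le_antisymm (h1 ▸ ih j) (hq0 k j)⟩
          have hy0 : ∀ j, 0 ≤ y j := by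
            intro j
            rw [hy]; dsimp only
            by_cases hxj : 0 ≤ x (k + 1) j
            · rw [hq1k j hxj]
              exact mul_nonneg (by linarith [hq1 k j]) hxj
            · obtain ⟨h1, h2⟩ := hq0k j hxj
              rw [h1, h2]; simp
          have hPy : P (k + 1) *ᵥ y = y := by
            funext j
            rw [hPq (k + 1), Matrix.mulVec_diagonal]
            by_cases hxj : 0 ≤ x (k + 1) j
            · rw [hq1k j hxj, one_mul]
            · obtain ⟨h1, h2⟩ := hq0k j hxj
              rw [h1, hy]; dsimp only; rw [h1, h2]; ring
          have hAy : (1 + T * P (k + 1)) *ᵥ y = y + T *ᵥ y := by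
            rw [hTP, hPy]
          have hdiffy : P (k + 1) *ᵥ x (k + 1) = P k *ᵥ x (k + 1) + y := by
            funext j
            rw [hPq (k + 1), hPq k]
            simp only [Pi.add_apply, Matrix.mulVec_diagonal]
            rw [hy]; dsimp only; ring
          have hAx1 : (1 + T * P (k + 1)) *ᵥ x (k + 1) = b + T *ᵥ y := by
            rw [hTP, hdiffy, Matrix.mulVec_add, ← add_assoc, ← hTP k, hiter k]
          have hstep : x (k + 2) = x (k + 1) - y + N *ᵥ y := by
            apply hcancel (k + 1)
            rw [hiter (k + 1)]
            have hNy : (1 + T * P (k + 1)) *ᵥ (N *ᵥ y) = y := by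
              rw [Matrix.mulVec_mulVec, hN2, Matrix.one_mulVec]
            calc b = (b + T *ᵥ y) - (y + T *ᵥ y) + y := by abel
              _ = (1 + T * P (k + 1)) *ᵥ x (k + 1) - (1 + T * P (k + 1)) *ᵥ y
                    + (1 + T * P (k + 1)) *ᵥ (N *ᵥ y) := by rw [hAx1, hAy, hNy]
              _ = (1 + T * P (k + 1)) *ᵥ (x (k + 1) - y + N *ᵥ y) := by
                  rw [Matrix.mulVec_add, Matrix.mulVec_sub]
          have hx2 : x (k + 2) i = x (k + 1) i - y i + (N *ᵥ y) i := by rw [hstep]; rfl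
          have h7 : x (k + 1) i - y i = q k i * x (k + 1) i := by
            rw [hy]; dsimp only; rw [hq1k i hx]; ring
          have h8 : 0 ≤ (N *ᵥ y) i := by
            rw [Matrix.mulVec, dotProduct]
            exact Finset.sum_nonneg fun j _ => mul_nonneg (hN0 i j) (hy0 j)
          rw [hx2, h7]
          exact add_nonneg (mul_nonneg (hq0 k i) hx) h8
        · rw [show q (k + 1) i = 0 from by rw [hqdef]; simp [hx]]
          exact hq0 (k + 2) i
    -- values are 0 or 1
    have hqval : ∀ k i, q k i = 0 ∨ q k i = 1 := by
      intro k i; rw [hqdef]; dsimp only; split_ifs <;> simp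
    -- termination within n steps
    have hex : ∃ k ≤ n, q (k + 1) = q k := by
      by_contra hno
      push_neg at hno
      set S : ℕ → Finset (Fin n) :=
        fun k => Finset.univ.filter (fun i => q k i = 1) with hS
      have hSm : ∀ k, S k ⊆ S (k + 1) := by
        intro k i hi
        simp only [hS, Finset.mem_filter, Finset.mem_univ, true_and] at hi ⊢
        have h1 := hmono k i
        rw [hi] at h1
        rcases hqval (k + 1) i with h | h
        · rw [h] at h1; linarith
        · exact h
      have hstrict : ∀ k, k ≤ n + 1 → k ≤ (S k).card := by
        intro k
        induction k with
        | zero => intro _; exact Nat.zero_le _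
        | succ k ih' =>
          intro hk
          have h1 : k ≤ (S k).card := ih' (by omega)
          have hne : S k ≠ S (k + 1) := by
            intro heq
            apply hno k (by omega)
            funext i
            have hiff : q k i = 1 ↔ q (k + 1) i = 1 := by
              constructor <;> intro h''
              · have : i ∈ S k := by
                  simp only [hS, Finset.mem_filter, Finset.mem_univ, true_and]; exact h''
                rw [heq] at this
                simpa only [hS, Finset.mem_filter, Finset.mem_univ, true_and] using this
              · have : i ∈ S (k + 1) := by
                  simp only [hS, Finset.mem_filter, Finset.mem_univ, true_and]; exact h''
                rw [← heq] at this
                simpa only [hS, Finset.mem_filter, Finset.mem_univ, true_and] using this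
            rcases hqval k i with h | h <;> rcases hqval (k + 1) i with h' | h'
            · rw [h, h']
            · exact absurd (hiff.mpr h') (by rw [h]; norm_num)
            · exact absurd (hiff.mp h) (by rw [h']; norm_num)
            · rw [h, h']
          have hss : S k ⊂ S (k + 1) := Finset.ssubset_iff_subset_ne.mpr ⟨hSm k, hne⟩
          have h2 := Finset.card_lt_card hss
          omega
      have h3 := hstrict (n + 1) le_rfl
      have h4 : (S (n + 1)).card ≤ n := by
        have := Finset.card_le_univ (S (n + 1))
        simpa [Fintype.card_fin] using this
      omega
    obtain ⟨k, hkn, hqeq⟩ := hex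
    have hPeq : P (k + 1) = P k := by rw [hPq, hPq, hqeq]
    have hPmx : Pmat (x (k + 1)) = P (k + 1) := (hPk (k + 1) (Nat.succ_le_succ (Nat.zero_le k))).symm
    have hsolve : (1 + T * Pmat (x (k + 1))) *ᵥ x (k + 1) = b := by
      rw [hPmx, hPeq]; exact hiter k
    refine ⟨k, hkn, ?_, hsolve, ?_⟩
    · rw [hPeq, sub_self, Matrix.zero_mulVec]
    · -- uniqueness
      intro z hz
      set w : Fin n → ℝ := x (k + 1) with hw
      set c : Fin n → ℝ := fun i => if z i = w i then 0 else
        ((if 0 ≤ z i then (1 : ℝ) else 0) * z i - (if 0 ≤ w i then (1 : ℝ) else 0) * w i)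
          / (z i - w i) with hcdef
      have hc01 : ∀ i, 0 ≤ c i ∧ c i ≤ 1 := by
        intro i
        by_cases h : z i = w i
        · rw [hcdef]; dsimp only; rw [if_pos h]; norm_num
        · rw [hcdef]; dsimp only; rw [if_neg h]
          rcases lt_or_gt_of_ne h with hlt | hgt
          · obtain ⟨hg1, hg2⟩ := gdiff hlt.le
            have hkey : ((if 0 ≤ z i then (1 : ℝ) else 0) * z i
                - (if 0 ≤ w i then (1 : ℝ) else 0) * w i) / (z i - w i)
                = ((if 0 ≤ w i then (1 : ℝ) else 0) * w i
                - (if 0 ≤ z i then (1 : ℝ) else 0) * z i) / (w i - z i) := by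
              rw [← neg_div_neg_eq]; ring_nf
            rw [hkey]
            exact ⟨div_nonneg hg1 (by linarith), (div_le_one (by linarith)).mpr hg2⟩
          · obtain ⟨hg1, hg2⟩ := gdiff hgt.le
            exact ⟨div_nonneg hg1 (by linarith), (div_le_one (by linarith)).mpr hg2⟩
      have hceq : ∀ i, c i * (z i - w i)
          = (if 0 ≤ z i then (1 : ℝ) else 0) * z i - (if 0 ≤ w i then (1 : ℝ) else 0) * w i := by
        intro i
        by_cases h : z i = w i
        · rw [hcdef]; dsimp only; rw [if_pos h, h]; ring
        · rw [hcdef]; dsimp only; rw [if_neg h, div_mul_cancel₀ _ (sub_ne_zero.mpr h)]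
      have hgv : ∀ v : Fin n → ℝ, (1 + T * Pmat v) *ᵥ v
          = v + T *ᵥ (fun i => (if 0 ≤ v i then (1 : ℝ) else 0) * v i) := by
        intro v
        rw [Matrix.add_mulVec, Matrix.one_mulVec, ← Matrix.mulVec_mulVec, Pmat,
          show (Matrix.diagonal fun i => if 0 ≤ v i then (1 : ℝ) else 0) *ᵥ v
              = fun i => (if 0 ≤ v i then (1 : ℝ) else 0) * v i from
            funext fun i => Matrix.mulVec_diagonal _ _ _]
      have hsub : (z - w) + T *ᵥ (fun i => c i * (z i - w i)) = 0 := by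
        have h1 := hz; rw [hgv] at h1
        have h2 := hsolve; rw [hgv] at h2
        have h3 : (fun i => c i * (z i - w i))
            = (fun i => (if 0 ≤ z i then (1 : ℝ) else 0) * z i)
              - (fun i => (if 0 ≤ w i then (1 : ℝ) else 0) * w i) := by
          funext i
          rw [Pi.sub_apply, hceq i]
        rw [h3, Matrix.mulVec_sub]
        have h5 : (z - w) + (T *ᵥ (fun i => (if 0 ≤ z i then (1 : ℝ) else 0) * z i)
            - T *ᵥ (fun i => (if 0 ≤ w i then (1 : ℝ) else 0) * w i))
            = (z + T *ᵥ (fun i => (if 0 ≤ z i then (1 : ℝ) else 0) * z i))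
              - (w + T *ᵥ (fun i => (if 0 ≤ w i then (1 : ℝ) else 0) * w i)) := by abel
        rw [h5, h1, h2, sub_self]
      have hfin : (1 + T * Matrix.diagonal c) *ᵥ (z - w) = 0 := by
        rw [Matrix.add_mulVec, Matrix.one_mulVec, ← Matrix.mulVec_mulVec]
        have h6 : Matrix.diagonal c *ᵥ (z - w) = fun i => c i * (z i - w i) := by
          funext i
          rw [Matrix.mulVec_diagonal, Pi.sub_apply]
        rw [h6]
        exact hsub
      obtain ⟨N, hN1, _, _⟩ := mkey hT c hc01
      have h9 : z - w = 0 := by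
        have h10 := congrArg (fun v => N *ᵥ v) hfin
        simpa [Matrix.mulVec_mulVec, hN1, Matrix.one_mulVec, Matrix.mulVec_zero] using h10
      have := sub_eq_zero.mp h9
      rw [this]
end
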